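/- arXiv:0707.2421 — 4 statements merged into one kernel-verified Lean document; each statement's English description precedes it below -/
import Mathlib

section
/- For all integers a, b ≥ 0, the edge-colored distributive lattice L_G2(a,b) of G2-semistandard tableaux of shape (a,b) satisfies the structure condition for the G2 Cartan matrix with rows M_α = (2,−1), M_β = (−3,2): for every covering edge S ⋖ T of color γ, wt(T) = wt(S) + M_γ. -/
/-- The two colors (simple-root labels) `α` and `β`. -/
inductive TwoColor : Type
  | alpha : TwoColor
  | beta : TwoColor
  deriving DecidableEq

/-- Lengths of paths of `r`-edges ending at `t`. -/
def chainsEndingAt {V : Type*} (r : V → V → Prop) (t : V) : Set ℕ :=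
  {n : ℕ | ∃ c : ℕ → V, c n = t ∧ ∀ i : ℕ, i < n → r (c i) (c (i + 1))}

/-- Lengths of paths of `r`-edges starting at `t`. -/
def chainsStartingAt {V : Type*} (r : V → V → Prop) (t : V) : Set ℕ :=
  {n : ℕ | ∃ c : ℕ → V, c 0 = t ∧ ∀ i : ℕ, i < n → r (c i) (c (i + 1))}

/-- `ρ`: the maximum number of edges in a chain of `r`-edges ending at `t`. -/
noncomputable def rhoOf {V : Type*} (r : V → V → Prop) (t : V) : ℕ :=
  sSup (chainsEndingAt r t)

/-- `δ`: the maximum number of edges in a chain of `r`-edges starting at `t`. -/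
noncomputable def deltaOf {V : Type*} (r : V → V → Prop) (t : V) : ℕ :=
  sSup (chainsStartingAt r t)

/-- `l = ρ + δ`. -/
noncomputable def lenOf {V : Type*} (r : V → V → Prop) (t : V) : ℕ :=
  rhoOf r t + deltaOf r t

/-- The weight `wt(t) = (ρ_α(t) − δ_α(t), ρ_β(t) − δ_β(t))` of an element of an
edge-colored poset whose (colored) covering relations are given by `cov`. -/
noncomputable def wtOf {V : Type*} (cov : TwoColor → V → V → Prop) (t : V) : ℤ × ℤ :=
  ((rhoOf (cov TwoColor.alpha) t : ℤ) - (deltaOf (cov TwoColor.alpha) t : ℤ),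
   (rhoOf (cov TwoColor.beta) t : ℤ) - (deltaOf (cov TwoColor.beta) t : ℤ))

/-- The structure condition for a `2 × 2` integer matrix `M` (given by its rows
`M γ` for `γ ∈ {α, β}`): along any covering edge of color `γ`, the weight changes by `M γ`. -/
def StructureCondition {V : Type*} (cov : TwoColor → V → V → Prop)
    (M : TwoColor → ℤ × ℤ) : Prop :=
  ∀ (γ : TwoColor) (s t : V), cov γ s t → wtOf cov t = wtOf cov s + M γ

/-- The elements of the distributive lattice `J(P)`: order ideals (lower sets) of `P`. -/
abbrev OrderIdeal (V : Type*) [PartialOrder V] : Type _ := {I : Set V // IsLowerSet I}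

/-- The colored covering relation of `J_color(P)` for a vertex-colored poset `P`:
`s ⋖ t` with color `γ` when `t ∖ s` is a single vertex of color `γ`. -/
def idealCov {V : Type*} [PartialOrder V] (vcolor : V → TwoColor) (γ : TwoColor)
    (s t : OrderIdeal V) : Prop :=
  ∃ u : V, vcolor u = γ ∧ u ∉ s.1 ∧ t.1 = insert u s.1
/-- A filling of the shape with `b` columns of length two (each recorded as
(top entry, bottom entry)) followed by `a` columns of length one. -/
abbrev TabT (a b : ℕ) : Type := (Fin b → ℕ × ℕ) × (Fin a → ℕ)

/-- `n_k(T)`: the number of entries of the tableau `T` equal to `k`. -/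
def nkOf {m n : ℕ} (T : (Fin m → ℕ × ℕ) × (Fin n → ℕ)) (k : ℕ) : ℕ :=
  (Finset.univ.filter fun j : Fin m => (T.1 j).1 = k).card +
    (Finset.univ.filter fun j : Fin m => (T.1 j).2 = k).card +
    (Finset.univ.filter fun i : Fin n => T.2 i = k).card

/-- The set of `A2`-semistandard tableaux of shape `(a,b)`: entries from `{1,2,3}`,
rows weakly increasing, columns strictly increasing. -/
def SA2 (a b : ℕ) : Set (TabT a b) :=
  {T | (∀ j : Fin b, 1 ≤ (T.1 j).1 ∧ (T.1 j).1 ≤ 3 ∧ 1 ≤ (T.1 j).2 ∧ (T.1 j).2 ≤ 3 ∧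
          (T.1 j).1 < (T.1 j).2) ∧
       (∀ i : Fin a, 1 ≤ T.2 i ∧ T.2 i ≤ 3) ∧
       (∀ j j' : Fin b, j ≤ j' → (T.1 j).1 ≤ (T.1 j').1 ∧ (T.1 j).2 ≤ (T.1 j').2) ∧
       (∀ i i' : Fin a, i ≤ i' → T.2 i ≤ T.2 i') ∧
       (∀ (j : Fin b) (i : Fin a), (T.1 j).1 ≤ T.2 i)}

/-- The set of `C2`-semistandard tableaux of shape `(a,b)`: entries from `{1,2,3,4}`,
rows weakly increasing, columns strictly increasing, no column equal to `(1,4)`,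
and at most one column equal to `(2,3)`. -/
def SC2 (a b : ℕ) : Set (TabT a b) :=
  {T | (∀ j : Fin b, 1 ≤ (T.1 j).1 ∧ (T.1 j).1 ≤ 4 ∧ 1 ≤ (T.1 j).2 ∧ (T.1 j).2 ≤ 4 ∧
          (T.1 j).1 < (T.1 j).2) ∧
       (∀ i : Fin a, 1 ≤ T.2 i ∧ T.2 i ≤ 4) ∧
       (∀ j j' : Fin b, j ≤ j' → (T.1 j).1 ≤ (T.1 j').1 ∧ (T.1 j).2 ≤ (T.1 j').2) ∧
       (∀ i i' : Fin a, i ≤ i' → T.2 i ≤ T.2 i') ∧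
       (∀ (j : Fin b) (i : Fin a), (T.1 j).1 ≤ T.2 i) ∧
       (∀ j : Fin b, T.1 j ≠ (1, 4)) ∧
       (∀ j j' : Fin b, T.1 j = (2, 3) → T.1 j' = (2, 3) → j = j')}

/-- The restrictions of Figure 4.5 on a pair of adjacent length-two columns of a
`G2`-semistandard tableau. -/
def g2pair2 (c c' : ℕ × ℕ) : Prop :=
  (c = (1, 4) → c' ≠ (1, 4) ∧ c' ≠ (1, 5) ∧ c' ≠ (1, 6) ∧ c' ≠ (1, 7)) ∧
  (c = (1, 5) → c' ≠ (1, 5) ∧ c' ≠ (1, 6) ∧ c' ≠ (1, 7)) ∧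
  (c = (1, 6) → c' ≠ (1, 6) ∧ c' ≠ (1, 7) ∧ c' ≠ (2, 6) ∧ c' ≠ (2, 7)) ∧
  (c = (2, 6) → c' ≠ (2, 6) ∧ c' ≠ (2, 7)) ∧
  (c = (1, 7) → c' ≠ (1, 7) ∧ c' ≠ (2, 7) ∧ c' ≠ (3, 7) ∧ c' ≠ (4, 7)) ∧
  (c = (2, 7) → c' ≠ (2, 7) ∧ c' ≠ (3, 7) ∧ c' ≠ (4, 7)) ∧
  (c = (3, 7) → c' ≠ (3, 7) ∧ c' ≠ (4, 7)) ∧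
  (c = (4, 7) → c' ≠ (4, 7))

/-- The restrictions of Figure 4.5 on a length-two column followed by a
length-one column in a `G2`-semistandard tableau. -/
def g2pair1 (c : ℕ × ℕ) (e : ℕ) : Prop :=
  (c = (1, 4) → e ≠ 1) ∧
  (c = (1, 5) → e ≠ 1) ∧
  (c = (1, 6) → e ≠ 1 ∧ e ≠ 2) ∧
  (c = (2, 6) → e ≠ 2) ∧
  (c = (1, 7) → e ≠ 1 ∧ e ≠ 2 ∧ e ≠ 3 ∧ e ≠ 4) ∧
  (c = (2, 7) → e ≠ 2 ∧ e ≠ 3 ∧ e ≠ 4) ∧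
  (c = (3, 7) → e ≠ 3 ∧ e ≠ 4) ∧
  (c = (4, 7) → e ≠ 4)

/-- The set of `G2`-semistandard tableaux of shape `(a,b)`. -/
def SG2 (a b : ℕ) : Set (TabT a b) :=
  {T | (∀ j : Fin b, 1 ≤ (T.1 j).1 ∧ (T.1 j).1 ≤ 7 ∧ 1 ≤ (T.1 j).2 ∧ (T.1 j).2 ≤ 7 ∧
          (T.1 j).1 < (T.1 j).2) ∧
       (∀ i : Fin a, 1 ≤ T.2 i ∧ T.2 i ≤ 7) ∧
       (∀ j j' : Fin b, j ≤ j' → (T.1 j).1 ≤ (T.1 j').1 ∧ (T.1 j).2 ≤ (T.1 j').2) ∧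
       (∀ i i' : Fin a, i ≤ i' → T.2 i ≤ T.2 i') ∧
       (∀ (j : Fin b) (i : Fin a), (T.1 j).1 ≤ T.2 i) ∧
       (∀ i i' : Fin a, T.2 i = 4 → T.2 i' = 4 → i = i') ∧
       (∀ j : Fin b, T.1 j ≠ (2, 3) ∧ T.1 j ≠ (2, 4) ∧ T.1 j ≠ (3, 4) ∧ T.1 j ≠ (3, 5) ∧
          T.1 j ≠ (4, 5) ∧ T.1 j ≠ (4, 6) ∧ T.1 j ≠ (5, 6)) ∧
       (∀ j j' : Fin b, (j' : ℕ) = (j : ℕ) + 1 → g2pair2 (T.1 j) (T.1 j')) ∧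
       (∀ (j : Fin b) (i : Fin a), (j : ℕ) + 1 = b → (i : ℕ) = 0 → g2pair1 (T.1 j) (T.2 i))}
/-- The edge colors determined by tableau entries: for `A2`, the entry `1` gives
color `α` and the entry `2` gives color `β`. -/
def colEntA2 : ℕ → TwoColor := fun n => if n = 2 then TwoColor.beta else TwoColor.alpha

/-- For `C2`, entries `1` and `3` give color `α` and entry `2` gives color `β`. -/
def colEntC2 : ℕ → TwoColor := fun n => if n = 2 then TwoColor.beta else TwoColor.alpha

/-- For `G2`, entries `1, 3, 4, 6` give color `α` and entries `2, 5` give color `β`. -/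
def colEntG2 : ℕ → TwoColor :=
  fun n => if n = 2 ∨ n = 5 then TwoColor.beta else TwoColor.alpha

/-- The colored covering relation of a lattice of semistandard tableaux:
`T` covers `S` exactly when `S` is obtained from `T` by increasing a single
entry by `1`, and the edge is colored according to the entry of `T`
at the changed position (via `colEnt`). -/
def tabCov {a b : ℕ} (colEnt : ℕ → TwoColor) (SSet : Set (TabT a b)) (γ : TwoColor)
    (S T : {T : TabT a b // T ∈ SSet}) : Prop :=
  (∃ j : Fin b, colEnt ((T.1.1 j).1) = γ ∧
      S.1.1 j = ((T.1.1 j).1 + 1, (T.1.1 j).2) ∧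
      (∀ j' : Fin b, j' ≠ j → S.1.1 j' = T.1.1 j') ∧ S.1.2 = T.1.2) ∨
  (∃ j : Fin b, colEnt ((T.1.1 j).2) = γ ∧
      S.1.1 j = ((T.1.1 j).1, (T.1.1 j).2 + 1) ∧
      (∀ j' : Fin b, j' ≠ j → S.1.1 j' = T.1.1 j') ∧ S.1.2 = T.1.2) ∨
  (∃ i : Fin a, colEnt (T.1.2 i) = γ ∧
      S.1.2 i = T.1.2 i + 1 ∧
      (∀ i' : Fin a, i' ≠ i → S.1.2 i' = T.1.2 i') ∧ S.1.1 = T.1.1)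

/-- The colored covering relation of the lattice `L_A2(a,b)`. -/
def covA2 (a b : ℕ) (γ : TwoColor) (S T : {T : TabT a b // T ∈ SA2 a b}) : Prop :=
  tabCov colEntA2 (SA2 a b) γ S T

/-- The colored covering relation of the lattice `L_C2(a,b)`. -/
def covC2 (a b : ℕ) (γ : TwoColor) (S T : {T : TabT a b // T ∈ SC2 a b}) : Prop :=
  tabCov colEntC2 (SC2 a b) γ S T

/-- The colored covering relation of the lattice `L_G2(a,b)`. -/
def covG2 (a b : ℕ) (γ : TwoColor) (S T : {T : TabT a b // T ∈ SG2 a b}) : Prop :=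
  tabCov colEntG2 (SG2 a b) γ S T

/-- The `A2` Cartan matrix, given by its rows `M_α = (2,−1)`, `M_β = (−1,2)`. -/
def MA2 : TwoColor → ℤ × ℤ
  | TwoColor.alpha => (2, -1)
  | TwoColor.beta => (-1, 2)

/-- The `C2` Cartan matrix, given by its rows `M_α = (2,−1)`, `M_β = (−2,2)`. -/
def MC2 : TwoColor → ℤ × ℤ
  | TwoColor.alpha => (2, -1)
  | TwoColor.beta => (-2, 2)

/-- The `G2` Cartan matrix, given by its rows `M_α = (2,−1)`, `M_β = (−3,2)`. -/
def MG2 : TwoColor → ℤ × ℤ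
  | TwoColor.alpha => (2, -1)
  | TwoColor.beta => (-3, 2)


/-! ### Auxiliary development for the G2 structure theorem -/

set_option maxHeartbeats 2000000

instance g2ImpDec (p q : Prop) [Decidable p] [Decidable q] : Decidable (p → q) :=
  if hp : p then
    (if hq : q then isTrue (fun _ => hq) else isFalse (fun h => hq (h hp)))
  else isTrue (fun h => absurd h hp)

set_option synthInstance.maxSize 5000 in
instance g2pair2Dec (c c' : ℕ × ℕ) : Decidable (g2pair2 c c') := by
  unfold g2pair2; infer_instance

set_option synthInstance.maxSize 5000 in
instance g2pair1Dec (c : ℕ × ℕ) (e : ℕ) : Decidable (g2pair1 c e) := by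
  unfold g2pair1; infer_instance

namespace G2SC

/-- The list of the 14 admissible columns. -/
def VL : List (ℕ × ℕ) :=
  [(1,2),(1,3),(1,4),(1,5),(1,6),(1,7),(2,5),(2,6),(2,7),(3,6),(3,7),(4,7),(5,7),(6,7)]

def rowVals : List ℕ := [1,2,3,4,5,6,7]

def colR : ℕ × ℕ → ℕ := fun c =>
  if c = (1,3) then 3 else if c = (1,4) then 2 else if c = (1,5) then 1
  else if c = (1,6) then 2 else if c = (1,7) then 1 else if c = (2,6) then 1
  else if c = (3,6) then 3 else if c = (3,7) then 2 else if c = (4,7) then 1 else 0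

def colD : ℕ × ℕ → ℕ := fun c =>
  if c = (1,4) then 1 else if c = (1,5) then 2 else if c = (1,7) then 1
  else if c = (2,5) then 3 else if c = (2,6) then 1 else if c = (2,7) then 2
  else if c = (3,7) then 1 else if c = (4,7) then 2 else if c = (5,7) then 3 else 0

def entR : ℕ → ℕ := fun e =>
  if e = 1 then 1 else if e = 3 then 2 else if e = 4 then 1 else if e = 6 then 1 else 0

def entD : ℕ → ℕ := fun e =>
  if e = 2 then 1 else if e = 4 then 1 else if e = 5 then 2 else if e = 7 then 1 else 0

def cB : ℕ → ℕ := fun e => if e = 2 ∨ e = 5 then 1 else 0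
def cD : ℕ → ℕ := fun e => if e = 3 ∨ e = 6 then 1 else 0
def fB : ℕ × ℕ → ℕ := fun c => cB c.1 + cB c.2
def fD : ℕ × ℕ → ℕ := fun c => cD c.1 + cD c.2

abbrev has25 (c : ℕ × ℕ) : Prop := c.1 = 2 ∨ c.1 = 5 ∨ c.2 = 2 ∨ c.2 = 5
abbrev has36 (c : ℕ × ℕ) : Prop := c.1 = 3 ∨ c.1 = 6 ∨ c.2 = 3 ∨ c.2 = 6

variable {a b : ℕ}

def PA (T : TabT a b) : ℕ := (∑ j, colR (T.1 j)) + ∑ i, entR (T.2 i)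
def DA (T : TabT a b) : ℕ := (∑ j, colD (T.1 j)) + ∑ i, entD (T.2 i)
def PB (T : TabT a b) : ℕ := (∑ j, fB (T.1 j)) + ∑ i, cB (T.2 i)
def DB (T : TabT a b) : ℕ := (∑ j, fD (T.1 j)) + ∑ i, cD (T.2 i)

/-- Classification of admissible columns. -/
lemma col_mem_VL {x y : ℕ} (h1 : 1 ≤ x) (h2 : x ≤ 7) (h3 : 1 ≤ y) (h4 : y ≤ 7)
    (h5 : x < y) (hf : (x, y) ≠ (2, 3) ∧ (x, y) ≠ (2, 4) ∧ (x, y) ≠ (3, 4) ∧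
      (x, y) ≠ (3, 5) ∧ (x, y) ≠ (4, 5) ∧ (x, y) ≠ (4, 6) ∧ (x, y) ≠ (5, 6)) :
    (x, y) ∈ VL := by
  obtain ⟨f1, f2, f3, f4, f5, f6, f7⟩ := hf
  interval_cases x <;> interval_cases y <;> simp_all <;> decide

lemma colT_mem {T : TabT a b} (hT : T ∈ SG2 a b) (j : Fin b) : T.1 j ∈ VL := by
  simp only [SG2, Set.mem_setOf_eq] at hT
  obtain ⟨c1, _, _, _, _, _, c7, _, _⟩ := hT
  obtain ⟨h1, h2, h3, h4, h5⟩ := c1 j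
  have := col_mem_VL h1 h2 h3 h4 h5 (by
    obtain ⟨f1, f2, f3, f4, f5, f6, f7⟩ := c7 j
    exact ⟨f1, f2, f3, f4, f5, f6, f7⟩)
  simpa using this

lemma mem_rowVals {e : ℕ} (h1 : 1 ≤ e) (h2 : e ≤ 7) : e ∈ rowVals := by
  interval_cases e <;> decide

lemma VL_props : ∀ c ∈ VL, (1 ≤ c.1 ∧ c.1 ≤ 7 ∧ 1 ≤ c.2 ∧ c.2 ≤ 7 ∧ c.1 < c.2) ∧
    (c ≠ (2,3) ∧ c ≠ (2,4) ∧ c ≠ (3,4) ∧ c ≠ (3,5) ∧ c ≠ (4,5) ∧ c ≠ (4,6) ∧ c ≠ (5,6)) := by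
  decide

lemma cB_eq_zero {x : ℕ} (h : ¬(x = 2 ∨ x = 5)) : cB x = 0 := by simp [cB, h]
lemma cD_eq_zero {x : ℕ} (h : ¬(x = 3 ∨ x = 6)) : cD x = 0 := by simp [cD, h]

lemma colEnt_alpha_iff {k : ℕ} : colEntG2 k = TwoColor.alpha ↔ ¬(k = 2 ∨ k = 5) := by
  unfold colEntG2; split <;> simp_all

lemma colEnt_beta_iff {k : ℕ} : colEntG2 k = TwoColor.beta ↔ (k = 2 ∨ k = 5) := by
  unfold colEntG2; split <;> simp_all

/-- Choice of a maximal index satisfying a decidable predicate. -/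
lemma exists_max_prop {n : ℕ} (P : Fin n → Prop) [DecidablePred P] (h : ∃ i, P i) :
    ∃ i, P i ∧ ∀ i', i < i' → ¬ P i' := by
  obtain ⟨i0, hi0⟩ := h
  have hne : (Finset.univ.filter P).Nonempty := ⟨i0, by simp [hi0]⟩
  refine ⟨(Finset.univ.filter P).max' hne, ?_, ?_⟩
  · have := Finset.max'_mem _ hne
    simpa using this
  · intro i' hlt hP
    have hle : i' ≤ (Finset.univ.filter P).max' hne := Finset.le_max' _ i' (by simp [hP])
    exact absurd hlt (not_lt.mpr hle)

lemma exists_min_prop {n : ℕ} (P : Fin n → Prop) [DecidablePred P] (h : ∃ i, P i) :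
    ∃ i, P i ∧ ∀ i', i' < i → ¬ P i' := by
  obtain ⟨i0, hi0⟩ := h
  have hne : (Finset.univ.filter P).Nonempty := ⟨i0, by simp [hi0]⟩
  refine ⟨(Finset.univ.filter P).min' hne, ?_, ?_⟩
  · have := Finset.min'_mem _ hne
    simpa using this
  · intro i' hlt hP
    have hle : (Finset.univ.filter P).min' hne ≤ i' := Finset.min'_le _ i' (by simp [hP])
    exact absurd hlt (not_lt.mpr hle)

/-- Exchange identity for a sum over an update at one position. -/
lemma sum_exchange {n : ℕ} {M : Type*} (f : M → ℕ) (g g' : Fin n → M) (j : Fin n)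
    (hj : ∀ j' ≠ j, g' j' = g j') :
    (∑ x, f (g' x)) + f (g j) = (∑ x, f (g x)) + f (g' j) := by
  classical
  have h1 := Finset.add_sum_erase Finset.univ (fun x => f (g' x)) (Finset.mem_univ j)
  have h2 := Finset.add_sum_erase Finset.univ (fun x => f (g x)) (Finset.mem_univ j)
  have h3 : (∑ x ∈ Finset.univ.erase j, f (g' x)) = ∑ x ∈ Finset.univ.erase j, f (g x) :=
    Finset.sum_congr rfl (fun x hx => by rw [hj x (Finset.ne_of_mem_erase hx)])
  omega

end G2SC

namespace G2SC

/-! ### Move functions and decidable tables -/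

def mvPB : ℕ × ℕ → ℕ × ℕ := fun c =>
  if c = (1,2) then (1,3) else if c = (1,5) then (1,6) else if c = (2,5) then (2,6)
  else if c = (2,6) then (3,6) else if c = (2,7) then (3,7) else if c = (5,7) then (6,7) else c

def mvDB : ℕ × ℕ → ℕ × ℕ := fun c =>
  if c = (1,3) then (1,2) else if c = (1,6) then (1,5) else if c = (2,6) then (2,5)
  else if c = (3,6) then (2,6) else if c = (3,7) then (2,7) else if c = (6,7) then (5,7) else c

def mvPA : ℕ × ℕ → ℕ × ℕ := fun c =>
  if c = (1,3) then (1,4) else if c = (1,4) then (1,5) else if c = (1,5) then (2,5)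
  else if c = (1,6) then (2,6) else if c = (1,7) then (2,7) else if c = (2,6) then (2,7)
  else if c = (3,6) then (3,7) else if c = (3,7) then (4,7) else if c = (4,7) then (5,7) else c

def mvDA : ℕ × ℕ → ℕ × ℕ := fun c =>
  if c = (1,4) then (1,3) else if c = (1,5) then (1,4) else if c = (1,7) then (1,6)
  else if c = (2,5) then (1,5) else if c = (2,6) then (1,6) else if c = (2,7) then (2,6)
  else if c = (3,7) then (3,6) else if c = (4,7) then (3,7) else if c = (5,7) then (4,7) else c

lemma tblPB : ∀ c ∈ VL, has25 c →
    mvPB c ∈ VL ∧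
    (c.1 ≤ (mvPB c).1 ∧ c.2 ≤ (mvPB c).2) ∧
    (((mvPB c).1 = c.1 + 1 ∧ (mvPB c).2 = c.2 ∧ (c.1 = 2 ∨ c.1 = 5)) ∨
     ((mvPB c).1 = c.1 ∧ (mvPB c).2 = c.2 + 1 ∧ (c.2 = 2 ∨ c.2 = 5))) ∧
    (∀ d ∈ VL, c.1 ≤ d.1 → c.2 ≤ d.2 → ¬ has25 d →
      ((mvPB c).1 ≤ d.1 ∧ (mvPB c).2 ≤ d.2) ∧ (g2pair2 c d → g2pair2 (mvPB c) d)) ∧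
    (∀ d ∈ VL, d.1 ≤ c.1 → d.2 ≤ c.2 → g2pair2 d c → g2pair2 d (mvPB c)) ∧
    (∀ e ∈ rowVals, ¬(e = 2 ∨ e = 5) → c.1 ≤ e →
      (mvPB c).1 ≤ e ∧ (g2pair1 c e → g2pair1 (mvPB c) e)) := by decide

lemma tblDB : ∀ c ∈ VL, has36 c →
    mvDB c ∈ VL ∧
    ((mvDB c).1 ≤ c.1 ∧ (mvDB c).2 ≤ c.2) ∧
    ((c.1 = (mvDB c).1 + 1 ∧ c.2 = (mvDB c).2 ∧ ((mvDB c).1 = 2 ∨ (mvDB c).1 = 5)) ∨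
     (c.1 = (mvDB c).1 ∧ c.2 = (mvDB c).2 + 1 ∧ ((mvDB c).2 = 2 ∨ (mvDB c).2 = 5))) ∧
    (∀ d ∈ VL, d.1 ≤ c.1 → d.2 ≤ c.2 → ¬ has36 d →
      (d.1 ≤ (mvDB c).1 ∧ d.2 ≤ (mvDB c).2) ∧ (g2pair2 d c → g2pair2 d (mvDB c))) ∧
    (∀ d ∈ VL, c.1 ≤ d.1 → c.2 ≤ d.2 → g2pair2 c d → g2pair2 (mvDB c) d) ∧
    (∀ e ∈ rowVals, c.1 ≤ e →
      (mvDB c).1 ≤ e ∧ (g2pair1 c e → g2pair1 (mvDB c) e)) := by decide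

lemma tblPA : ∀ c ∈ VL, colR c ≠ 0 →
    mvPA c ∈ VL ∧
    (c.1 ≤ (mvPA c).1 ∧ c.2 ≤ (mvPA c).2) ∧
    (((mvPA c).1 = c.1 + 1 ∧ (mvPA c).2 = c.2 ∧ ¬(c.1 = 2 ∨ c.1 = 5)) ∨
     ((mvPA c).1 = c.1 ∧ (mvPA c).2 = c.2 + 1 ∧ ¬(c.2 = 2 ∨ c.2 = 5))) ∧
    (∀ d ∈ VL, c.1 ≤ d.1 → c.2 ≤ d.2 → colR d = 0 →
      ((mvPA c).1 ≤ d.1 ∧ (mvPA c).2 ≤ d.2) ∧ (g2pair2 c d → g2pair2 (mvPA c) d)) ∧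
    (∀ d ∈ VL, d.1 ≤ c.1 → d.2 ≤ c.2 → g2pair2 d c → g2pair2 d (mvPA c)) ∧
    (∀ e ∈ rowVals, ¬(e = 1 ∨ e = 3 ∨ e = 4 ∨ e = 6) → c.1 ≤ e →
      (mvPA c).1 ≤ e ∧ (g2pair1 c e → g2pair1 (mvPA c) e)) := by decide

lemma tblDA : ∀ c ∈ VL, colD c ≠ 0 →
    mvDA c ∈ VL ∧
    ((mvDA c).1 ≤ c.1 ∧ (mvDA c).2 ≤ c.2) ∧
    ((c.1 = (mvDA c).1 + 1 ∧ c.2 = (mvDA c).2 ∧ ¬((mvDA c).1 = 2 ∨ (mvDA c).1 = 5)) ∨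
     (c.1 = (mvDA c).1 ∧ c.2 = (mvDA c).2 + 1 ∧ ¬((mvDA c).2 = 2 ∨ (mvDA c).2 = 5))) ∧
    (∀ d ∈ VL, d.1 ≤ c.1 → d.2 ≤ c.2 → colD d = 0 →
      (d.1 ≤ (mvDA c).1 ∧ d.2 ≤ (mvDA c).2) ∧ (g2pair2 d c → g2pair2 d (mvDA c))) ∧
    (∀ d ∈ VL, c.1 ≤ d.1 → c.2 ≤ d.2 → g2pair2 c d → g2pair2 (mvDA c) d) ∧
    (∀ e ∈ rowVals, c.1 ≤ e →
      (mvDA c).1 ≤ e ∧ (g2pair1 c e → g2pair1 (mvDA c) e)) := by decide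

lemma tblEdgeTop : ∀ c ∈ VL, ∀ c' ∈ VL, c'.1 = c.1 + 1 → c'.2 = c.2 →
    (¬(c.1 = 2 ∨ c.1 = 5) →
      colR c = colR c' + 1 ∧ colD c' = colD c + 1 ∧ fB c + fD c' + 1 = fB c' + fD c) ∧
    ((c.1 = 2 ∨ c.1 = 5) →
      fB c = fB c' + 1 ∧ fD c' = fD c + 1 ∧ colR c' + colD c = colR c + colD c' + 3) := by decide

lemma tblEdgeBot : ∀ c ∈ VL, ∀ c' ∈ VL, c'.1 = c.1 → c'.2 = c.2 + 1 →
    (¬(c.2 = 2 ∨ c.2 = 5) →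
      colR c = colR c' + 1 ∧ colD c' = colD c + 1 ∧ fB c + fD c' + 1 = fB c' + fD c) ∧
    ((c.2 = 2 ∨ c.2 = 5) →
      fB c = fB c' + 1 ∧ fD c' = fD c + 1 ∧ colR c' + colD c = colR c + colD c' + 3) := by decide

lemma tblEdgeRow : ∀ k ∈ rowVals, ∀ k' ∈ rowVals, k' = k + 1 →
    (¬(k = 2 ∨ k = 5) →
      entR k = entR k' + 1 ∧ entD k' = entD k + 1 ∧ cB k + cD k' + 1 = cB k' + cD k) ∧
    ((k = 2 ∨ k = 5) →
      cB k = cB k' + 1 ∧ cD k' = cD k + 1 ∧ entR k' + entD k = entR k + entD k' + 3) := by decide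

lemma tblRowP1B : ∀ c ∈ VL, ∀ e ∈ rowVals, (e = 2 ∨ e = 5) → c.1 ≤ e →
    g2pair1 c e → g2pair1 c (e + 1) := by decide

lemma tblRowD1B : ∀ c ∈ VL, ∀ e ∈ rowVals, (e = 3 ∨ e = 6) → ¬ has36 c → c.1 ≤ e →
    g2pair1 c e → g2pair1 c (e - 1) := by decide

lemma tblRowP1A : ∀ c ∈ VL, ∀ e ∈ rowVals, (e = 1 ∨ e = 3 ∨ e = 4 ∨ e = 6) → c.1 ≤ e →
    g2pair1 c e → g2pair1 c (e + 1) := by decide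

lemma tblRowD1A : ∀ c ∈ VL, colD c = 0 → ∀ e ∈ rowVals, (e = 2 ∨ e = 4 ∨ e = 5 ∨ e = 7) →
    c.1 ≤ e → g2pair1 c e → g2pair1 c (e - 1) := by decide

lemma tblTopD0 : ∀ c ∈ VL, colD c = 0 → c.1 ≠ 2 ∧ c.1 ≠ 4 ∧ c.1 ≠ 5 ∧ c.1 ≠ 7 := by decide

end G2SC

namespace G2SC

/-! ### Membership lemmas for single-entry updates -/

lemma rowUpdate_mem {T : TabT a b} (hT : T ∈ SG2 a b) (i : Fin a) (v : ℕ)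
    (h1 : 1 ≤ v) (h7 : v ≤ 7)
    (hprev : ∀ i' : Fin a, i' < i → T.2 i' ≤ v)
    (hnext : ∀ i' : Fin a, i < i' → v ≤ T.2 i')
    (htop : ∀ j : Fin b, (T.1 j).1 ≤ v)
    (h4 : v = 4 → ∀ i' : Fin a, i' ≠ i → T.2 i' ≠ 4)
    (hp1 : (i : ℕ) = 0 → ∀ j : Fin b, (j : ℕ) + 1 = b → g2pair1 (T.1 j) v) :
    ((T.1, Function.update T.2 i v) : TabT a b) ∈ SG2 a b := by
  simp only [SG2, Set.mem_setOf_eq] at hT ⊢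
  obtain ⟨c1, c2, c3, c4, c5, c6, c7, c8, c9⟩ := hT
  refine ⟨c1, ?_, c3, ?_, ?_, ?_, c7, c8, ?_⟩
  · intro i'
    rcases eq_or_ne i' i with rfl | hne
    · simpa using ⟨h1, h7⟩
    · simpa [Function.update_of_ne hne] using c2 i'
  · intro i1 i2 h12
    rcases eq_or_ne i1 i with rfl | hne1
    · rcases eq_or_ne i2 i1 with rfl | hne2
      · simp
      · simp only [Function.update_self, Function.update_of_ne hne2]
        exact hnext i2 (lt_of_le_of_ne h12 (Ne.symm hne2))
    · rcases eq_or_ne i2 i with rfl | hne2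
      · simp only [Function.update_self, Function.update_of_ne hne1]
        exact hprev i1 (lt_of_le_of_ne h12 hne1)
      · simpa [Function.update_of_ne hne1, Function.update_of_ne hne2] using c4 i1 i2 h12
  · intro j i'
    rcases eq_or_ne i' i with rfl | hne
    · simpa using htop j
    · simpa [Function.update_of_ne hne] using c5 j i'
  · intro i1 i2 e1 e2
    rcases eq_or_ne i1 i with rfl | hne1
    · rcases eq_or_ne i2 i1 with rfl | hne2
      · rfl
      · rw [Function.update_self] at e1
        rw [Function.update_of_ne hne2] at e2
        exact absurd e2 (h4 e1 i2 hne2)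
    · rcases eq_or_ne i2 i with rfl | hne2
      · rw [Function.update_self] at e2
        rw [Function.update_of_ne hne1] at e1
        exact absurd e1 (h4 e2 i1 hne1)
      · rw [Function.update_of_ne hne1] at e1
        rw [Function.update_of_ne hne2] at e2
        exact c6 i1 i2 e1 e2
  · intro j i' hj hi'
    rcases eq_or_ne i' i with rfl | hne
    · rw [Function.update_self]
      exact hp1 hi' j hj
    · rw [Function.update_of_ne hne]
      exact c9 j i' hj hi'

lemma colUpdate_mem {T : TabT a b} (hT : T ∈ SG2 a b) (j : Fin b) (c : ℕ × ℕ)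
    (hcVL : c ∈ VL)
    (hprev : ∀ j' : Fin b, j' < j → (T.1 j').1 ≤ c.1 ∧ (T.1 j').2 ≤ c.2)
    (hnext : ∀ j' : Fin b, j < j' → c.1 ≤ (T.1 j').1 ∧ c.2 ≤ (T.1 j').2)
    (hprevpair : ∀ j' : Fin b, (j' : ℕ) + 1 = (j : ℕ) → g2pair2 (T.1 j') c)
    (hnextpair : ∀ j' : Fin b, (j : ℕ) + 1 = (j' : ℕ) → g2pair2 c (T.1 j'))
    (hrow : ∀ i : Fin a, c.1 ≤ T.2 i)
    (hp1 : (j : ℕ) + 1 = b → ∀ i : Fin a, (i : ℕ) = 0 → g2pair1 c (T.2 i)) :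
    ((Function.update T.1 j c, T.2) : TabT a b) ∈ SG2 a b := by
  obtain ⟨hcb, hcf⟩ := VL_props c hcVL
  simp only [SG2, Set.mem_setOf_eq] at hT ⊢
  obtain ⟨c1, c2, c3, c4, c5, c6, c7, c8, c9⟩ := hT
  refine ⟨?_, c2, ?_, c4, ?_, c6, ?_, ?_, ?_⟩
  · intro j'
    rcases eq_or_ne j' j with rfl | hne
    · simpa using hcb
    · simpa [Function.update_of_ne hne] using c1 j'
  · intro j1 j2 h12
    rcases eq_or_ne j1 j with rfl | hne1
    · rcases eq_or_ne j2 j1 with rfl | hne2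
      · simp
      · simp only [Function.update_self, Function.update_of_ne hne2]
        exact hnext j2 (lt_of_le_of_ne h12 (Ne.symm hne2))
    · rcases eq_or_ne j2 j with rfl | hne2
      · simp only [Function.update_self, Function.update_of_ne hne1]
        exact hprev j1 (lt_of_le_of_ne h12 hne1)
      · simpa [Function.update_of_ne hne1, Function.update_of_ne hne2] using c3 j1 j2 h12
  · intro j' i
    rcases eq_or_ne j' j with rfl | hne
    · simpa using hrow i
    · simpa [Function.update_of_ne hne] using c5 j' i
  · intro j'
    rcases eq_or_ne j' j with rfl | hne
    · simpa using hcf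
    · simpa [Function.update_of_ne hne] using c7 j'
  · intro j1 j2 h12
    rcases eq_or_ne j1 j with rfl | hne1
    · rcases eq_or_ne j2 j1 with rfl | hne2
      · omega
      · simp only [Function.update_self, Function.update_of_ne hne2]
        exact hnextpair j2 h12.symm
    · rcases eq_or_ne j2 j with rfl | hne2
      · simp only [Function.update_self, Function.update_of_ne hne1]
        exact hprevpair j1 h12.symm
      · simpa [Function.update_of_ne hne1, Function.update_of_ne hne2] using c8 j1 j2 h12
  · intro j' i hj' hi
    rcases eq_or_ne j' j with rfl | hne
    · rw [Function.update_self]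
      exact hp1 hj' i hi
    · rw [Function.update_of_ne hne]
      exact c9 j' i hj' hi

end G2SC

namespace G2SC

/-! ### Change of the statistics along a covering edge -/

lemma edge_delta {γ : TwoColor} {s t : {T : TabT a b // T ∈ SG2 a b}}
    (h : covG2 a b γ s t) :
    (γ = TwoColor.alpha →
      PA t.1 = PA s.1 + 1 ∧ DA s.1 = DA t.1 + 1 ∧ PB t.1 + DB s.1 + 1 = PB s.1 + DB t.1) ∧
    (γ = TwoColor.beta →
      PB t.1 = PB s.1 + 1 ∧ DB s.1 = DB t.1 + 1 ∧ PA t.1 + DA s.1 + 3 = PA s.1 + DA t.1) := by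
  rcases h with ⟨j, hcol, hSj, hoth, hrw⟩ | ⟨j, hcol, hSj, hoth, hrw⟩ | ⟨i, hcol, hSi, hoth, hcl⟩
  · -- top entry of column j raised
    have hcVL := colT_mem t.2 j
    have hc'VL := colT_mem s.2 j
    have h1 : (s.1.1 j).1 = (t.1.1 j).1 + 1 := by rw [hSj]
    have h2 : (s.1.1 j).2 = (t.1.1 j).2 := by rw [hSj]
    have eR := sum_exchange colR t.1.1 s.1.1 j hoth
    have eD := sum_exchange colD t.1.1 s.1.1 j hoth
    have eB := sum_exchange fB t.1.1 s.1.1 j hoth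
    have eE := sum_exchange fD t.1.1 s.1.1 j hoth
    have tbl := tblEdgeTop _ hcVL _ hc'VL h1 h2
    constructor
    · rintro rfl
      obtain ⟨e1, e2, e3⟩ := tbl.1 (colEnt_alpha_iff.mp hcol)
      refine ⟨?_, ?_, ?_⟩ <;> · simp only [PA, DA, PB, DB]; rw [hrw]; omega
    · rintro rfl
      obtain ⟨e1, e2, e3⟩ := tbl.2 (colEnt_beta_iff.mp hcol)
      refine ⟨?_, ?_, ?_⟩ <;> · simp only [PA, DA, PB, DB]; rw [hrw]; omega
  · -- bottom entry of column j raised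
    have hcVL := colT_mem t.2 j
    have hc'VL := colT_mem s.2 j
    have h1 : (s.1.1 j).1 = (t.1.1 j).1 := by rw [hSj]
    have h2 : (s.1.1 j).2 = (t.1.1 j).2 + 1 := by rw [hSj]
    have eR := sum_exchange colR t.1.1 s.1.1 j hoth
    have eD := sum_exchange colD t.1.1 s.1.1 j hoth
    have eB := sum_exchange fB t.1.1 s.1.1 j hoth
    have eE := sum_exchange fD t.1.1 s.1.1 j hoth
    have tbl := tblEdgeBot _ hcVL _ hc'VL h1 h2
    constructor
    · rintro rfl
      obtain ⟨e1, e2, e3⟩ := tbl.1 (colEnt_alpha_iff.mp hcol)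
      refine ⟨?_, ?_, ?_⟩ <;> · simp only [PA, DA, PB, DB]; rw [hrw]; omega
    · rintro rfl
      obtain ⟨e1, e2, e3⟩ := tbl.2 (colEnt_beta_iff.mp hcol)
      refine ⟨?_, ?_, ?_⟩ <;> · simp only [PA, DA, PB, DB]; rw [hrw]; omega
  · -- row entry i raised
    have hts := t.2
    have hss := s.2
    simp only [SG2, Set.mem_setOf_eq] at hts hss
    have hkb := hts.2.1 i
    have hkb' := hss.2.1 i
    have eR := sum_exchange entR t.1.2 s.1.2 i hoth
    have eD := sum_exchange entD t.1.2 s.1.2 i hoth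
    have eB := sum_exchange cB t.1.2 s.1.2 i hoth
    have eE := sum_exchange cD t.1.2 s.1.2 i hoth
    have tbl := tblEdgeRow _ (mem_rowVals hkb.1 hkb.2) _ (mem_rowVals hkb'.1 hkb'.2) hSi
    constructor
    · rintro rfl
      obtain ⟨e1, e2, e3⟩ := tbl.1 (colEnt_alpha_iff.mp hcol)
      refine ⟨?_, ?_, ?_⟩ <;> · simp only [PA, DA, PB, DB]; rw [hcl]; omega
    · rintro rfl
      obtain ⟨e1, e2, e3⟩ := tbl.2 (colEnt_beta_iff.mp hcol)
      refine ⟨?_, ?_, ?_⟩ <;> · simp only [PA, DA, PB, DB]; rw [hcl]; omega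

end G2SC

namespace G2SC

lemma fB_zero {c : ℕ × ℕ} (h : ¬ has25 c) : fB c = 0 := by
  simp only [has25, not_or] at h
  simp [fB, cB, h.1, h.2.1, h.2.2.1, h.2.2.2]

lemma fD_zero {c : ℕ × ℕ} (h : ¬ has36 c) : fD c = 0 := by
  simp only [has36, not_or] at h
  simp [fD, cD, h.1, h.2.1, h.2.2.1, h.2.2.2]

lemma entR_zero {e : ℕ} (h : ¬(e = 1 ∨ e = 3 ∨ e = 4 ∨ e = 6)) : entR e = 0 := by
  simp only [not_or] at h
  simp [entR, h.1, h.2.1, h.2.2.1, h.2.2.2]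

lemma entD_zero {e : ℕ} (h : ¬(e = 2 ∨ e = 4 ∨ e = 5 ∨ e = 7)) : entD e = 0 := by
  simp only [not_or] at h
  simp [entD, h.1, h.2.1, h.2.2.1, h.2.2.2]

/-! ### Existence of moves -/

lemma hexPB (t : {T : TabT a b // T ∈ SG2 a b}) (h : 0 < PB t.1) :
    ∃ s, covG2 a b TwoColor.beta s t := by
  obtain ⟨T, hT⟩ := t
  have hTm := hT
  simp only [SG2, Set.mem_setOf_eq] at hTm
  obtain ⟨c1, c2, c3, c4, c5, c6, c7, c8, c9⟩ := hTm
  have hpos : 0 < PB T := h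
  by_cases hr : ∃ i : Fin a, T.2 i = 2 ∨ T.2 i = 5
  · obtain ⟨i, hi, hmax⟩ := exists_max_prop _ hr
    have hmem : ((T.1, Function.update T.2 i (T.2 i + 1)) : TabT a b) ∈ SG2 a b := by
      apply rowUpdate_mem hT i (T.2 i + 1)
      · omega
      · rcases hi with h' | h' <;> omega
      · intro i' hlt
        have := c4 i' i (le_of_lt hlt)
        omega
      · intro i' hlt
        have h1 := c4 i i' (le_of_lt hlt)
        have h2 := hmax i' hlt
        rw [not_or] at h2
        rcases hi with h' | h' <;> omega
      · intro j
        have := c5 j i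
        omega
      · intro h4
        rcases hi with h' | h' <;> omega
      · intro hi0 j hj
        exact tblRowP1B _ (colT_mem hT j) _ (mem_rowVals (c2 i).1 (c2 i).2) hi (c5 j i)
          (c9 j i hj hi0)
    refine ⟨⟨_, hmem⟩, Or.inr (Or.inr ⟨i, ?_, ?_, ?_, rfl⟩)⟩
    · rcases hi with h' | h' <;> rw [h'] <;> rfl
    · simp
    · intro i' hne
      exact Function.update_of_ne hne _ _
  · push_neg at hr
    have hc : ∃ j : Fin b, has25 (T.1 j) := by
      by_contra hno
      push_neg at hno
      have hPB : PB T = 0 := by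
        simp only [PB]
        rw [Finset.sum_eq_zero (fun j _ => fB_zero (fun hh => by have := hno j; simp only [has25] at hh; omega)),
          Finset.sum_eq_zero (fun i _ => cB_eq_zero (not_or.mpr (hr i)))]
        rfl
      omega
    obtain ⟨j, hj25, hjmax⟩ := exists_max_prop (fun j : Fin b => has25 (T.1 j)) hc
    obtain ⟨hVL', hmono, hdesc, hnextT, hprevT, hrowT⟩ := tblPB _ (colT_mem hT j) hj25
    have hmem : ((Function.update T.1 j (mvPB (T.1 j)), T.2) : TabT a b) ∈ SG2 a b := by
      apply colUpdate_mem hT j _ hVL'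
      · intro j' hlt
        have hm := c3 j' j (le_of_lt hlt)
        exact ⟨le_trans hm.1 hmono.1, le_trans hm.2 hmono.2⟩
      · intro j' hlt
        have hm := c3 j j' (le_of_lt hlt)
        exact (hnextT _ (colT_mem hT j') hm.1 hm.2 (hjmax j' hlt)).1
      · intro j' hj'
        have hlt : j' < j := by rw [Fin.lt_def]; omega
        have hm := c3 j' j (le_of_lt hlt)
        exact hprevT _ (colT_mem hT j') hm.1 hm.2 (c8 j' j hj'.symm)
      · intro j' hj'
        have hlt : j < j' := by rw [Fin.lt_def]; omega
        have hm := c3 j j' (le_of_lt hlt)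
        exact (hnextT _ (colT_mem hT j') hm.1 hm.2 (hjmax j' hlt)).2 (c8 j j' hj'.symm)
      · intro i
        exact (hrowT _ (mem_rowVals (c2 i).1 (c2 i).2) (not_or.mpr (hr i)) (c5 j i)).1
      · intro hlast i hi0
        exact (hrowT _ (mem_rowVals (c2 i).1 (c2 i).2) (not_or.mpr (hr i)) (c5 j i)).2
          (c9 j i hlast hi0)
    refine ⟨⟨_, hmem⟩, ?_⟩
    rcases hdesc with ⟨hd1, hd2, hd25⟩ | ⟨hd1, hd2, hd25⟩
    · refine Or.inl ⟨j, ?_, ?_, ?_, rfl⟩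
      · exact colEnt_beta_iff.mpr hd25
      · show Function.update T.1 j (mvPB (T.1 j)) j = _
        rw [Function.update_self]
        exact Prod.ext_iff.mpr ⟨hd1, hd2⟩
      · intro j' hne
        exact Function.update_of_ne hne _ _
    · refine Or.inr (Or.inl ⟨j, ?_, ?_, ?_, rfl⟩)
      · exact colEnt_beta_iff.mpr hd25
      · show Function.update T.1 j (mvPB (T.1 j)) j = _
        rw [Function.update_self]
        exact Prod.ext_iff.mpr ⟨hd1, hd2⟩
      · intro j' hne
        exact Function.update_of_ne hne _ _

end G2SC

namespace G2SC

lemma hexDB (t : {T : TabT a b // T ∈ SG2 a b}) (h : 0 < DB t.1) :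
    ∃ u, covG2 a b TwoColor.beta t u := by
  obtain ⟨T, hT⟩ := t
  have hTm := hT
  simp only [SG2, Set.mem_setOf_eq] at hTm
  obtain ⟨c1, c2, c3, c4, c5, c6, c7, c8, c9⟩ := hTm
  have hpos : 0 < DB T := h
  by_cases hcol : ∃ j : Fin b, has36 (T.1 j)
  · obtain ⟨j, hj36, hjmin⟩ := exists_min_prop _ hcol
    obtain ⟨hVL', hmono, hdesc, hprevT, hnextT, hrowT⟩ := tblDB _ (colT_mem hT j) hj36
    have hmem : ((Function.update T.1 j (mvDB (T.1 j)), T.2) : TabT a b) ∈ SG2 a b := by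
      apply colUpdate_mem hT j _ hVL'
      · intro j' hlt
        have hm := c3 j' j (le_of_lt hlt)
        exact (hprevT _ (colT_mem hT j') hm.1 hm.2 (hjmin j' hlt)).1
      · intro j' hlt
        have hm := c3 j j' (le_of_lt hlt)
        exact ⟨le_trans hmono.1 hm.1, le_trans hmono.2 hm.2⟩
      · intro j' hj'
        have hlt : j' < j := by rw [Fin.lt_def]; omega
        have hm := c3 j' j (le_of_lt hlt)
        exact (hprevT _ (colT_mem hT j') hm.1 hm.2 (hjmin j' hlt)).2 (c8 j' j hj'.symm)
      · intro j' hj'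
        have hlt : j < j' := by rw [Fin.lt_def]; omega
        have hm := c3 j j' (le_of_lt hlt)
        exact hnextT _ (colT_mem hT j') hm.1 hm.2 (c8 j j' hj'.symm)
      · intro i
        exact (hrowT _ (mem_rowVals (c2 i).1 (c2 i).2) (c5 j i)).1
      · intro hlast i hi0
        exact (hrowT _ (mem_rowVals (c2 i).1 (c2 i).2) (c5 j i)).2 (c9 j i hlast hi0)
    refine ⟨⟨_, hmem⟩, ?_⟩
    rcases hdesc with ⟨hd1, hd2, hd25⟩ | ⟨hd1, hd2, hd25⟩
    · refine Or.inl ⟨j, ?_, ?_, ?_, rfl⟩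
      · show colEntG2 ((Function.update T.1 j (mvDB (T.1 j)) j).1) = _
        rw [Function.update_self]
        exact colEnt_beta_iff.mpr hd25
      · show T.1 j = ((Function.update T.1 j (mvDB (T.1 j)) j).1 + 1,
          (Function.update T.1 j (mvDB (T.1 j)) j).2)
        rw [Function.update_self]
        exact Prod.ext_iff.mpr ⟨hd1, hd2⟩
      · intro j' hne
        exact (Function.update_of_ne hne _ _).symm
    · refine Or.inr (Or.inl ⟨j, ?_, ?_, ?_, rfl⟩)
      · show colEntG2 ((Function.update T.1 j (mvDB (T.1 j)) j).2) = _
        rw [Function.update_self]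
        exact colEnt_beta_iff.mpr hd25
      · show T.1 j = ((Function.update T.1 j (mvDB (T.1 j)) j).1,
          (Function.update T.1 j (mvDB (T.1 j)) j).2 + 1)
        rw [Function.update_self]
        exact Prod.ext_iff.mpr ⟨hd1, hd2⟩
      · intro j' hne
        exact (Function.update_of_ne hne _ _).symm
  · push_neg at hcol
    by_cases hre : ∃ i : Fin a, T.2 i = 3 ∨ T.2 i = 6
    · obtain ⟨i, hi, hmin⟩ := exists_min_prop _ hre
      have hmem : ((T.1, Function.update T.2 i (T.2 i - 1)) : TabT a b) ∈ SG2 a b := by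
        apply rowUpdate_mem hT i (T.2 i - 1)
        · rcases hi with h' | h' <;> omega
        · rcases hi with h' | h' <;> omega
        · intro i' hlt
          have h1 := c4 i' i (le_of_lt hlt)
          have h2 := hmin i' hlt
          push_neg at h2
          rcases hi with h' | h' <;> omega
        · intro i' hlt
          have := c4 i i' (le_of_lt hlt)
          omega
        · intro j
          have h1 := c5 j i
          have h2 := hcol j
          rcases hi with h' | h' <;> omega
        · intro h4
          rcases hi with h' | h' <;> omega
        · intro hi0 j hj
          exact tblRowD1B _ (colT_mem hT j) _ (mem_rowVals (c2 i).1 (c2 i).2) hi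
            (fun hh => by have := hcol j; simp only [has36] at hh; omega)
            (c5 j i) (c9 j i hj hi0)
      refine ⟨⟨_, hmem⟩, Or.inr (Or.inr ⟨i, ?_, ?_, ?_, rfl⟩)⟩
      · show colEntG2 (Function.update T.2 i (T.2 i - 1) i) = _
        rw [Function.update_self]
        rcases hi with h' | h' <;> rw [h'] <;> rfl
      · show T.2 i = Function.update T.2 i (T.2 i - 1) i + 1
        rw [Function.update_self]
        rcases hi with h' | h' <;> omega
      · intro i' hne
        exact (Function.update_of_ne hne _ _).symm
    · exfalso
      push_neg at hre
      have hDB : DB T = 0 := by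
        simp only [DB]
        rw [Finset.sum_eq_zero (fun j _ => fD_zero (fun hh => by have := hcol j; simp only [has36] at hh; omega)),
          Finset.sum_eq_zero (fun i _ => cD_eq_zero (by
            have := hre i
            simp only [not_or]
            exact ⟨by omega, by omega⟩))]
        rfl
      omega

lemma hexPA (t : {T : TabT a b // T ∈ SG2 a b}) (h : 0 < PA t.1) :
    ∃ s, covG2 a b TwoColor.alpha s t := by
  obtain ⟨T, hT⟩ := t
  have hTm := hT
  simp only [SG2, Set.mem_setOf_eq] at hTm
  obtain ⟨c1, c2, c3, c4, c5, c6, c7, c8, c9⟩ := hTm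
  have hpos : 0 < PA T := h
  by_cases hr : ∃ i : Fin a, T.2 i = 1 ∨ T.2 i = 3 ∨ T.2 i = 4 ∨ T.2 i = 6
  · obtain ⟨i, hi, hmax⟩ := exists_max_prop _ hr
    have hmem : ((T.1, Function.update T.2 i (T.2 i + 1)) : TabT a b) ∈ SG2 a b := by
      apply rowUpdate_mem hT i (T.2 i + 1)
      · omega
      · rcases hi with h' | h' | h' | h' <;> omega
      · intro i' hlt
        have := c4 i' i (le_of_lt hlt)
        omega
      · intro i' hlt
        have h1 := c4 i i' (le_of_lt hlt)
        have h2 := hmax i' hlt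
        push_neg at h2
        rcases hi with h' | h' | h' | h' <;> omega
      · intro j
        have := c5 j i
        omega
      · intro h4v i' hne hc4
        rcases lt_or_gt_of_ne hne with hlt | hgt
        · have := c4 i' i (le_of_lt hlt)
          omega
        · have h2 := hmax i' hgt
          push_neg at h2
          omega
      · intro hi0 j hj
        exact tblRowP1A _ (colT_mem hT j) _ (mem_rowVals (c2 i).1 (c2 i).2) hi (c5 j i)
          (c9 j i hj hi0)
    refine ⟨⟨_, hmem⟩, Or.inr (Or.inr ⟨i, ?_, ?_, ?_, rfl⟩)⟩
    · show colEntG2 (T.2 i) = _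
      exact colEnt_alpha_iff.mpr (by rcases hi with h' | h' | h' | h' <;> omega)
    · simp
    · intro i' hne
      exact Function.update_of_ne hne _ _
  · push_neg at hr
    have hc : ∃ j : Fin b, colR (T.1 j) ≠ 0 := by
      by_contra hno
      push_neg at hno
      have hPA : PA T = 0 := by
        simp only [PA]
        rw [Finset.sum_eq_zero (fun j _ => hno j),
          Finset.sum_eq_zero (fun i _ => entR_zero (by
            have := hr i
            simp only [not_or]
            exact ⟨by omega, by omega, by omega, by omega⟩))]
        rfl
      omega
    obtain ⟨j, hjR, hjmax⟩ := exists_max_prop (fun j : Fin b => colR (T.1 j) ≠ 0) hc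
    obtain ⟨hVL', hmono, hdesc, hnextT, hprevT, hrowT⟩ := tblPA _ (colT_mem hT j) hjR
    have hrownot : ∀ i : Fin a, ¬(T.2 i = 1 ∨ T.2 i = 3 ∨ T.2 i = 4 ∨ T.2 i = 6) := by
      intro i
      have := hr i
      simp only [not_or]
      exact ⟨by omega, by omega, by omega, by omega⟩
    have hmem : ((Function.update T.1 j (mvPA (T.1 j)), T.2) : TabT a b) ∈ SG2 a b := by
      apply colUpdate_mem hT j _ hVL'
      · intro j' hlt
        have hm := c3 j' j (le_of_lt hlt)
        exact ⟨le_trans hm.1 hmono.1, le_trans hm.2 hmono.2⟩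
      · intro j' hlt
        have hm := c3 j j' (le_of_lt hlt)
        exact (hnextT _ (colT_mem hT j') hm.1 hm.2 (not_not.mp (hjmax j' hlt))).1
      · intro j' hj'
        have hlt : j' < j := by rw [Fin.lt_def]; omega
        have hm := c3 j' j (le_of_lt hlt)
        exact hprevT _ (colT_mem hT j') hm.1 hm.2 (c8 j' j hj'.symm)
      · intro j' hj'
        have hlt : j < j' := by rw [Fin.lt_def]; omega
        have hm := c3 j j' (le_of_lt hlt)
        exact (hnextT _ (colT_mem hT j') hm.1 hm.2 (not_not.mp (hjmax j' hlt))).2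
          (c8 j j' hj'.symm)
      · intro i
        exact (hrowT _ (mem_rowVals (c2 i).1 (c2 i).2) (hrownot i) (c5 j i)).1
      · intro hlast i hi0
        exact (hrowT _ (mem_rowVals (c2 i).1 (c2 i).2) (hrownot i) (c5 j i)).2
          (c9 j i hlast hi0)
    refine ⟨⟨_, hmem⟩, ?_⟩
    rcases hdesc with ⟨hd1, hd2, hd25⟩ | ⟨hd1, hd2, hd25⟩
    · refine Or.inl ⟨j, ?_, ?_, ?_, rfl⟩
      · exact colEnt_alpha_iff.mpr hd25
      · show Function.update T.1 j (mvPA (T.1 j)) j = _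
        rw [Function.update_self]
        exact Prod.ext_iff.mpr ⟨hd1, hd2⟩
      · intro j' hne
        exact Function.update_of_ne hne _ _
    · refine Or.inr (Or.inl ⟨j, ?_, ?_, ?_, rfl⟩)
      · exact colEnt_alpha_iff.mpr hd25
      · show Function.update T.1 j (mvPA (T.1 j)) j = _
        rw [Function.update_self]
        exact Prod.ext_iff.mpr ⟨hd1, hd2⟩
      · intro j' hne
        exact Function.update_of_ne hne _ _

lemma hexDA (t : {T : TabT a b // T ∈ SG2 a b}) (h : 0 < DA t.1) :
    ∃ u, covG2 a b TwoColor.alpha t u := by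
  obtain ⟨T, hT⟩ := t
  have hTm := hT
  simp only [SG2, Set.mem_setOf_eq] at hTm
  obtain ⟨c1, c2, c3, c4, c5, c6, c7, c8, c9⟩ := hTm
  have hpos : 0 < DA T := h
  by_cases hcol : ∃ j : Fin b, colD (T.1 j) ≠ 0
  · obtain ⟨j, hjD, hjmin⟩ := exists_min_prop _ hcol
    obtain ⟨hVL', hmono, hdesc, hprevT, hnextT, hrowT⟩ := tblDA _ (colT_mem hT j) hjD
    have hmem : ((Function.update T.1 j (mvDA (T.1 j)), T.2) : TabT a b) ∈ SG2 a b := by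
      apply colUpdate_mem hT j _ hVL'
      · intro j' hlt
        have hm := c3 j' j (le_of_lt hlt)
        exact (hprevT _ (colT_mem hT j') hm.1 hm.2 (not_not.mp (hjmin j' hlt))).1
      · intro j' hlt
        have hm := c3 j j' (le_of_lt hlt)
        exact ⟨le_trans hmono.1 hm.1, le_trans hmono.2 hm.2⟩
      · intro j' hj'
        have hlt : j' < j := by rw [Fin.lt_def]; omega
        have hm := c3 j' j (le_of_lt hlt)
        exact (hprevT _ (colT_mem hT j') hm.1 hm.2 (not_not.mp (hjmin j' hlt))).2
          (c8 j' j hj'.symm)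
      · intro j' hj'
        have hlt : j < j' := by rw [Fin.lt_def]; omega
        have hm := c3 j j' (le_of_lt hlt)
        exact hnextT _ (colT_mem hT j') hm.1 hm.2 (c8 j j' hj'.symm)
      · intro i
        exact (hrowT _ (mem_rowVals (c2 i).1 (c2 i).2) (c5 j i)).1
      · intro hlast i hi0
        exact (hrowT _ (mem_rowVals (c2 i).1 (c2 i).2) (c5 j i)).2 (c9 j i hlast hi0)
    refine ⟨⟨_, hmem⟩, ?_⟩
    rcases hdesc with ⟨hd1, hd2, hd25⟩ | ⟨hd1, hd2, hd25⟩
    · refine Or.inl ⟨j, ?_, ?_, ?_, rfl⟩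
      · show colEntG2 ((Function.update T.1 j (mvDA (T.1 j)) j).1) = _
        rw [Function.update_self]
        exact colEnt_alpha_iff.mpr hd25
      · show T.1 j = ((Function.update T.1 j (mvDA (T.1 j)) j).1 + 1,
          (Function.update T.1 j (mvDA (T.1 j)) j).2)
        rw [Function.update_self]
        exact Prod.ext_iff.mpr ⟨hd1, hd2⟩
      · intro j' hne
        exact (Function.update_of_ne hne _ _).symm
    · refine Or.inr (Or.inl ⟨j, ?_, ?_, ?_, rfl⟩)
      · show colEntG2 ((Function.update T.1 j (mvDA (T.1 j)) j).2) = _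
        rw [Function.update_self]
        exact colEnt_alpha_iff.mpr hd25
      · show T.1 j = ((Function.update T.1 j (mvDA (T.1 j)) j).1,
          (Function.update T.1 j (mvDA (T.1 j)) j).2 + 1)
        rw [Function.update_self]
        exact Prod.ext_iff.mpr ⟨hd1, hd2⟩
      · intro j' hne
        exact (Function.update_of_ne hne _ _).symm
  · push_neg at hcol
    by_cases hre : ∃ i : Fin a, T.2 i = 2 ∨ T.2 i = 4 ∨ T.2 i = 5 ∨ T.2 i = 7
    · obtain ⟨i, hi, hmin⟩ := exists_min_prop _ hre
      have hmem : ((T.1, Function.update T.2 i (T.2 i - 1)) : TabT a b) ∈ SG2 a b := by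
        apply rowUpdate_mem hT i (T.2 i - 1)
        · rcases hi with h' | h' | h' | h' <;> omega
        · rcases hi with h' | h' | h' | h' <;> omega
        · intro i' hlt
          have h1 := c4 i' i (le_of_lt hlt)
          have h2 := hmin i' hlt
          push_neg at h2
          rcases hi with h' | h' | h' | h' <;> omega
        · intro i' hlt
          have := c4 i i' (le_of_lt hlt)
          omega
        · intro j
          have h1 := c5 j i
          have h2 := tblTopD0 _ (colT_mem hT j) (hcol j)
          rcases hi with h' | h' | h' | h' <;> omega
        · intro h4v i' hne hc4
          rcases lt_or_gt_of_ne hne with hlt | hgt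
          · have h2 := hmin i' hlt
            push_neg at h2
            omega
          · have := c4 i i' (le_of_lt hgt)
            rcases hi with h' | h' | h' | h' <;> omega
        · intro hi0 j hj
          exact tblRowD1A _ (colT_mem hT j) (hcol j) _ (mem_rowVals (c2 i).1 (c2 i).2) hi
            (c5 j i) (c9 j i hj hi0)
      refine ⟨⟨_, hmem⟩, Or.inr (Or.inr ⟨i, ?_, ?_, ?_, rfl⟩)⟩
      · show colEntG2 (Function.update T.2 i (T.2 i - 1) i) = _
        rw [Function.update_self]
        rcases hi with h' | h' | h' | h' <;> rw [h'] <;> rfl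
      · show T.2 i = Function.update T.2 i (T.2 i - 1) i + 1
        rw [Function.update_self]
        rcases hi with h' | h' | h' | h' <;> omega
      · intro i' hne
        exact (Function.update_of_ne hne _ _).symm
    · exfalso
      push_neg at hre
      have hDA : DA T = 0 := by
        simp only [DA]
        rw [Finset.sum_eq_zero (fun j _ => hcol j),
          Finset.sum_eq_zero (fun i _ => entD_zero (by
            have := hre i
            simp only [not_or]
            exact ⟨by omega, by omega, by omega, by omega⟩))]
        rfl
      omega

end G2SC

namespace G2SC

/-! ### Computing `rhoOf` and `deltaOf` from a compatible statistic -/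

lemma rhoOf_eq {V : Type*} (r : V → V → Prop) (P : V → ℕ)
    (hstep : ∀ s t, r s t → P t = P s + 1)
    (hex : ∀ t, 0 < P t → ∃ s, r s t) (t : V) :
    rhoOf r t = P t := by
  have hub : ∀ n ∈ chainsEndingAt r t, n ≤ P t := by
    rintro n ⟨c, hc, hedge⟩
    have key : ∀ m, m ≤ n → m ≤ P (c m) := by
      intro m
      induction m with
      | zero => intro _; exact Nat.zero_le _
      | succ k ih =>
        intro hk
        have h1 := ih (by omega)
        have h2 := hstep _ _ (hedge k (by omega))
        omega
    have := key n le_rfl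
    rwa [hc] at this
  have hmem : P t ∈ chainsEndingAt r t := by
    suffices hgen : ∀ m, ∀ t : V, P t = m →
        ∃ c : ℕ → V, c m = t ∧ ∀ i < m, r (c i) (c (i + 1)) by
      obtain ⟨c, h1, h2⟩ := hgen (P t) t rfl
      exact ⟨c, h1, h2⟩
    intro m
    induction m with
    | zero => intro t _; exact ⟨fun _ => t, rfl, by omega⟩
    | succ k ih =>
      intro t hPt
      obtain ⟨s, hs⟩ := hex t (by omega)
      have hPs : P s = k := by
        have := hstep s t hs
        omega
      obtain ⟨c, hc, hedge⟩ := ih s hPs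
      refine ⟨fun i => if i = k + 1 then t else c i, by simp, ?_⟩
      intro i hi
      rcases Nat.lt_or_ge i k with hik | hik
      · have e1 : i ≠ k + 1 := by omega
        have e2 : i + 1 ≠ k + 1 := by omega
        simpa [e1, e2, show i ≠ k by omega] using hedge i hik
      · have e0 : i = k := by omega
        subst e0
        have e1 : i ≠ i + 1 := by omega
        simpa [e1, hc] using hs
  unfold rhoOf
  exact le_antisymm (csSup_le ⟨P t, hmem⟩ hub) (le_csSup ⟨P t, hub⟩ hmem)

lemma deltaOf_eq {V : Type*} (r : V → V → Prop) (D : V → ℕ)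
    (hstep : ∀ s t, r s t → D s = D t + 1)
    (hex : ∀ t, 0 < D t → ∃ u, r t u) (t : V) :
    deltaOf r t = D t := by
  have hub : ∀ n ∈ chainsStartingAt r t, n ≤ D t := by
    rintro n ⟨c, hc, hedge⟩
    have key : ∀ m, m ≤ n → D (c m) + m ≤ D (c 0) := by
      intro m
      induction m with
      | zero => intro _; omega
      | succ k ih =>
        intro hk
        have h1 := ih (by omega)
        have h2 := hstep _ _ (hedge k (by omega))
        omega
    have h3 := key n le_rfl
    rw [hc] at h3
    omega
  have hmem : D t ∈ chainsStartingAt r t := by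
    suffices hgen : ∀ m, ∀ t : V, D t = m →
        ∃ c : ℕ → V, c 0 = t ∧ ∀ i < m, r (c i) (c (i + 1)) by
      obtain ⟨c, h1, h2⟩ := hgen (D t) t rfl
      exact ⟨c, h1, h2⟩
    intro m
    induction m with
    | zero => intro t _; exact ⟨fun _ => t, rfl, by omega⟩
    | succ k ih =>
      intro t hDt
      obtain ⟨u, hu⟩ := hex t (by omega)
      have hDu : D u = k := by
        have := hstep t u hu
        omega
      obtain ⟨c, hc, hedge⟩ := ih u hDu
      refine ⟨fun i => if i = 0 then t else c (i - 1), by simp, ?_⟩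
      intro i hi
      rcases Nat.eq_zero_or_pos i with rfl | hipos
      · simpa [hc] using hu
      · have e1 : i ≠ 0 := by omega
        have e2 : i + 1 ≠ 0 := by omega
        have e3 : i - 1 + 1 = i := by omega
        have := hedge (i - 1) (by omega)
        rw [e3] at this
        simpa [e1, e2] using this
  unfold deltaOf
  exact le_antisymm (csSup_le ⟨D t, hmem⟩ hub) (le_csSup ⟨D t, hub⟩ hmem)

end G2SC

/-- For all `a, b ≥ 0`, the edge-colored distributive lattice `L_G2(a,b)` of
`G2`-semistandard tableaux of shape `(a,b)` satisfies the structure condition for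
the `G2` Cartan matrix with rows `M_α = (2,−1)`, `M_β = (−3,2)`. -/
theorem G2_lattice_structure_condition (a b : ℕ) :
    StructureCondition (covG2 a b) MG2 := by
  intro γ s t h
  have hrA : ∀ u, rhoOf (covG2 a b TwoColor.alpha) u = G2SC.PA u.1 :=
    G2SC.rhoOf_eq (covG2 a b TwoColor.alpha) (fun u : {T : TabT a b // T ∈ SG2 a b} => G2SC.PA u.1)
      (fun s t hc => ((G2SC.edge_delta hc).1 rfl).1) G2SC.hexPA
  have hdA : ∀ u, deltaOf (covG2 a b TwoColor.alpha) u = G2SC.DA u.1 :=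
    G2SC.deltaOf_eq (covG2 a b TwoColor.alpha) (fun u : {T : TabT a b // T ∈ SG2 a b} => G2SC.DA u.1)
      (fun s t hc => ((G2SC.edge_delta hc).1 rfl).2.1) G2SC.hexDA
  have hrB : ∀ u, rhoOf (covG2 a b TwoColor.beta) u = G2SC.PB u.1 :=
    G2SC.rhoOf_eq (covG2 a b TwoColor.beta) (fun u : {T : TabT a b // T ∈ SG2 a b} => G2SC.PB u.1)
      (fun s t hc => ((G2SC.edge_delta hc).2 rfl).1) G2SC.hexPB
  have hdB : ∀ u, deltaOf (covG2 a b TwoColor.beta) u = G2SC.DB u.1 :=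
    G2SC.deltaOf_eq (covG2 a b TwoColor.beta) (fun u : {T : TabT a b // T ∈ SG2 a b} => G2SC.DB u.1)
      (fun s t hc => ((G2SC.edge_delta hc).2 rfl).2.1) G2SC.hexDB
  have hwt : ∀ u, wtOf (covG2 a b) u =
      (((G2SC.PA u.1 : ℤ) - G2SC.DA u.1), ((G2SC.PB u.1 : ℤ) - G2SC.DB u.1)) := by
    intro u
    unfold wtOf
    rw [hrA, hdA, hrB, hdB]
  rw [hwt, hwt]
  cases γ
  · obtain ⟨e1, e2, e3⟩ := (G2SC.edge_delta h).1 rfl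
    simp only [MG2, Prod.mk_add_mk, Prod.mk.injEq]
    constructor <;> omega
  · obtain ⟨e1, e2, e3⟩ := (G2SC.edge_delta h).2 rfl
    simp only [MG2, Prod.mk_add_mk, Prod.mk.injEq]
    constructor <;> omega
end

section
/- Fix integers a, b ≥ 0 and let P be the poset with elements u_1,...,u_{a+b}, t_1,...,t_b, w_{b+1},...,w_{a+b}, whose partial order is generated by the relations u_i < u_{i+1} for 1 ≤ i ≤ a+b−1, u_j < t_j for 1 ≤ j ≤ b, t_j < t_{j+1} for 1 ≤ j ≤ b−1, w_j < u_j for b+1 ≤ j ≤ a+b, and w_j < w_{j+1} for b+1 ≤ j ≤ a+b−1 (this is the A2-semistandard poset P_{A2}^{βα}(a,b), with each u_i colored α and each t_j and w_j colored β). For an order ideal I of P define tableau(I) to be the tableau of shape (a,b) whose j-th column, for 1 ≤ j ≤ b, is (2,3), (1,3), (1,2) according as the cardinality of I ∩ {u_j, t_j} is 0, 1, 2, and whose j-th column, for b+1 ≤ j ≤ a+b, is (3), (2), (1) according as the cardinality of I ∩ {w_j, u_j} is 0, 1, 2. Then the map I ↦ tableau(I) is a bijection from the set of order ideals of P onto S_A2(a,b).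 -/
/-- An order ideal of the poset generated by the covering relations `r`:
a subset closed downward under the reflexive-transitive closure of `r`. -/
def IsIdealOf {V : Type*} (r : V → V → Prop) (I : Set V) : Prop :=
  ∀ x y : V, Relation.ReflTransGen r x y → y ∈ I → x ∈ I

/-- The elements of the `A2`-semistandard poset `P_A2^{βα}(a,b)`:
`Sum.inl i` is `u_{i+1}` (`0 ≤ i < a+b`), `Sum.inr (Sum.inl j)` is `t_{j+1}`
(`0 ≤ j < b`), and `Sum.inr (Sum.inr k)` is `w_{b+1+k}` (`0 ≤ k < a`). -/
abbrev VA2 (a b : ℕ) : Type := Fin (a + b) ⊕ (Fin b ⊕ Fin a)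

/-- The generating relations of the `A2`-semistandard poset `P_A2^{βα}(a,b)`:
`u_i < u_{i+1}`, `u_j < t_j` (`j ≤ b`), `t_j < t_{j+1}`, `w_j < u_j` (`j ≥ b+1`),
and `w_j < w_{j+1}`. -/
def relA2 (a b : ℕ) : VA2 a b → VA2 a b → Prop := fun x y =>
  match x, y with
  | Sum.inl i, Sum.inl i' => (i' : ℕ) = (i : ℕ) + 1
  | Sum.inl i, Sum.inr (Sum.inl j) => (i : ℕ) = (j : ℕ)
  | Sum.inr (Sum.inl j), Sum.inr (Sum.inl j') => (j' : ℕ) = (j : ℕ) + 1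
  | Sum.inr (Sum.inr k), Sum.inl i => (i : ℕ) = b + (k : ℕ)
  | Sum.inr (Sum.inr k), Sum.inr (Sum.inr k') => (k' : ℕ) = (k : ℕ) + 1
  | _, _ => False

/-- The tableau associated to an order ideal `I` of `P_A2^{βα}(a,b)`: the `j`-th
length-two column is `(2,3)`, `(1,3)`, `(1,2)` according as `|I ∩ {u_j, t_j}|` is
`0`, `1`, `2`, and the `(b+k)`-th (length-one) column is `(3)`, `(2)`, `(1)`
according as `|I ∩ {w_{b+k}, u_{b+k}}|` is `0`, `1`, `2`. -/
noncomputable def tabA2 (a b : ℕ) (I : Set (VA2 a b)) : TabT a b :=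
  (fun j : Fin b =>
    (fun n : ℕ => if n = 0 then ((2 : ℕ), (3 : ℕ)) else if n = 1 then (1, 3) else (1, 2))
      ((I ∩ {Sum.inl ⟨(j : ℕ), lt_of_lt_of_le j.isLt (Nat.le_add_left b a)⟩,
             Sum.inr (Sum.inl j)}).ncard),
   fun k : Fin a =>
    (fun n : ℕ => if n = 0 then (3 : ℕ) else if n = 1 then 2 else 1)
      ((I ∩ {Sum.inr (Sum.inr k),
             Sum.inl ⟨b + (k : ℕ), by have := k.isLt; omega⟩}).ncard))

section A2Aux

open Classical in
lemma isIdealOf_iff_step {V : Type*} (r : V → V → Prop) (I : Set V) :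
    IsIdealOf r I ↔ ∀ x y : V, r x y → y ∈ I → x ∈ I := by
  constructor
  · exact fun h x y hr => h x y (Relation.ReflTransGen.single hr)
  · intro h x y hxy
    induction hxy with
    | refl => exact id
    | tail _ hstep ih => exact fun hc => ih (h _ _ hstep hc)

open Classical in
lemma ncard_inter_pair {V : Type*} (I : Set V) {x y : V} (hxy : x ≠ y) :
    (I ∩ {x, y}).ncard =
      (if x ∈ I then 1 else 0) + (if y ∈ I then 1 else 0) := by
  classical
  by_cases hx : x ∈ I <;> by_cases hy : y ∈ I <;>
    simp only [hx, hy, if_true, if_false]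
  · have h : I ∩ {x, y} = {x, y} := by
      ext z
      simp only [Set.mem_inter_iff, Set.mem_insert_iff, Set.mem_singleton_iff]
      constructor
      · tauto
      · rintro (rfl | rfl) <;> simp [hx, hy]
    rw [h, Set.ncard_pair hxy]
  · have h : I ∩ {x, y} = {x} := by
      ext z
      simp only [Set.mem_inter_iff, Set.mem_insert_iff, Set.mem_singleton_iff]
      constructor
      · rintro ⟨hz, rfl | rfl⟩
        · rfl
        · exact absurd hz hy
      · rintro rfl
        exact ⟨hx, Or.inl rfl⟩
    rw [h, Set.ncard_singleton]
  · have h : I ∩ {x, y} = {y} := by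
      ext z
      simp only [Set.mem_inter_iff, Set.mem_insert_iff, Set.mem_singleton_iff]
      constructor
      · rintro ⟨hz, rfl | rfl⟩
        · exact absurd hz hx
        · rfl
      · rintro rfl
        exact ⟨hy, Or.inr rfl⟩
    rw [h, Set.ncard_singleton]
  · have h : I ∩ {x, y} = ∅ := by
      ext z
      simp only [Set.mem_inter_iff, Set.mem_insert_iff, Set.mem_singleton_iff,
        Set.mem_empty_iff_false, iff_false, not_and, not_or]
      rintro hz
      constructor <;> rintro rfl <;> [exact hx hz; exact hy hz]
    rw [h, Set.ncard_empty]

variable {a b : ℕ} {I : Set (VA2 a b)}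

lemma chain_u (hI : ∀ x y, relA2 a b x y → y ∈ I → x ∈ I) :
    ∀ (n : ℕ) (i i' : Fin (a + b)), (i' : ℕ) = (i : ℕ) + n →
      Sum.inl i' ∈ I → Sum.inl i ∈ I := by
  intro n
  induction n with
  | zero =>
    intro i i' h hm
    have : i = i' := Fin.ext (by omega)
    rwa [this]
  | succ n ih =>
    intro i i' h hm
    have hlt : (i : ℕ) + n < a + b := by have := i'.isLt; omega
    refine ih i ⟨(i : ℕ) + n, hlt⟩ rfl (hI _ (Sum.inl i') ?_ hm)
    show (i' : ℕ) = ((i : ℕ) + n) + 1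
    omega

lemma chain_t (hI : ∀ x y, relA2 a b x y → y ∈ I → x ∈ I) :
    ∀ (n : ℕ) (j j' : Fin b), (j' : ℕ) = (j : ℕ) + n →
      Sum.inr (Sum.inl j') ∈ I → Sum.inr (Sum.inl j) ∈ I := by
  intro n
  induction n with
  | zero =>
    intro j j' h hm
    have : j = j' := Fin.ext (by omega)
    rwa [this]
  | succ n ih =>
    intro j j' h hm
    have hlt : (j : ℕ) + n < b := by have := j'.isLt; omega
    refine ih j ⟨(j : ℕ) + n, hlt⟩ rfl (hI _ (Sum.inr (Sum.inl j')) ?_ hm)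
    show (j' : ℕ) = ((j : ℕ) + n) + 1
    omega

lemma chain_w (hI : ∀ x y, relA2 a b x y → y ∈ I → x ∈ I) :
    ∀ (n : ℕ) (k k' : Fin a), (k' : ℕ) = (k : ℕ) + n →
      Sum.inr (Sum.inr k') ∈ I → Sum.inr (Sum.inr k) ∈ I := by
  intro n
  induction n with
  | zero =>
    intro k k' h hm
    have : k = k' := Fin.ext (by omega)
    rwa [this]
  | succ n ih =>
    intro k k' h hm
    have hlt : (k : ℕ) + n < a := by have := k'.isLt; omega
    refine ih k ⟨(k : ℕ) + n, hlt⟩ rfl (hI _ (Sum.inr (Sum.inr k')) ?_ hm)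
    show (k' : ℕ) = ((k : ℕ) + n) + 1
    omega

lemma step_tu (hI : ∀ x y, relA2 a b x y → y ∈ I → x ∈ I) (j : Fin b)
    (h : (j : ℕ) < a + b) :
    Sum.inr (Sum.inl j) ∈ I → Sum.inl (⟨(j : ℕ), h⟩ : Fin (a + b)) ∈ I :=
  hI _ _ rfl

lemma step_uw (hI : ∀ x y, relA2 a b x y → y ∈ I → x ∈ I) (k : Fin a)
    (h : b + (k : ℕ) < a + b) :
    Sum.inl (⟨b + (k : ℕ), h⟩ : Fin (a + b)) ∈ I → Sum.inr (Sum.inr k) ∈ I :=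
  hI _ _ rfl

open Classical in
lemma tab_two (hI : ∀ x y, relA2 a b x y → y ∈ I → x ∈ I) (j : Fin b)
    (hj : (j : ℕ) < a + b) :
    (tabA2 a b I).1 j =
      ((if Sum.inl (⟨(j : ℕ), hj⟩ : Fin (a + b)) ∈ I then 1 else 2),
       (if Sum.inr (Sum.inl j) ∈ I then 2 else 3)) := by
  show (fun n : ℕ => if n = 0 then ((2:ℕ),(3:ℕ)) else if n = 1 then (1,3) else (1,2))
    ((I ∩ {Sum.inl ⟨(j : ℕ), lt_of_lt_of_le j.isLt (Nat.le_add_left b a)⟩,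
            Sum.inr (Sum.inl j)}).ncard) = _
  rw [ncard_inter_pair I (by simp : (Sum.inl ⟨(j : ℕ), lt_of_lt_of_le j.isLt (Nat.le_add_left b a)⟩ : VA2 a b) ≠ Sum.inr (Sum.inl j))]
  by_cases hu : Sum.inl (⟨(j : ℕ), hj⟩ : Fin (a + b)) ∈ I <;>
    by_cases ht : Sum.inr (Sum.inl j) ∈ I
  · simp [hu, ht]
  · simp [hu, ht]
  · exact absurd (step_tu hI j hj ht) hu
  · simp [hu, ht]

open Classical in
lemma tab_one (hI : ∀ x y, relA2 a b x y → y ∈ I → x ∈ I) (k : Fin a)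
    (hk : b + (k : ℕ) < a + b) :
    (tabA2 a b I).2 k =
      (if Sum.inl (⟨b + (k : ℕ), hk⟩ : Fin (a + b)) ∈ I then 1
       else if Sum.inr (Sum.inr k) ∈ I then 2 else 3) := by
  show (fun n : ℕ => if n = 0 then (3:ℕ) else if n = 1 then 2 else 1)
    ((I ∩ {Sum.inr (Sum.inr k),
            Sum.inl ⟨b + (k : ℕ), by have := k.isLt; omega⟩}).ncard) = _
  rw [ncard_inter_pair I (by simp : (Sum.inr (Sum.inr k) : VA2 a b) ≠ Sum.inl ⟨b + (k : ℕ), by have := k.isLt; omega⟩)]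
  by_cases hu : Sum.inl (⟨b + (k : ℕ), hk⟩ : Fin (a + b)) ∈ I <;>
    by_cases hw : Sum.inr (Sum.inr k) ∈ I
  · simp [hu, hw]
  · exact absurd (step_uw hI k hk hu) hw
  · simp [hu, hw]
  · simp [hu, hw]

end A2Aux


section A2Aux2

/-- The inverse map: the ideal associated to a tableau. -/
def invA2 (a b : ℕ) (T : TabT a b) : Set (VA2 a b) := fun x =>
  match x with
  | Sum.inl i =>
      if h : (i : ℕ) < b then (T.1 ⟨(i : ℕ), h⟩).1 = 1
      else T.2 ⟨(i : ℕ) - b, by have := i.isLt; omega⟩ = 1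
  | Sum.inr (Sum.inl j) => (T.1 j).2 ≤ 2
  | Sum.inr (Sum.inr k) => T.2 k ≤ 2

variable {a b : ℕ}

lemma T2_congr (T : TabT a b) {k k' : Fin a} (h : (k : ℕ) = (k' : ℕ)) :
    T.2 k = T.2 k' := by rw [Fin.ext h]

lemma T1_congr (T : TabT a b) {j j' : Fin b} (h : (j : ℕ) = (j' : ℕ)) :
    T.1 j = T.1 j' := by rw [Fin.ext h]

lemma mem_invA2_u_lt (T : TabT a b) (j : Fin b) (h : (j : ℕ) < a + b) :
    (Sum.inl (⟨(j : ℕ), h⟩ : Fin (a + b)) ∈ invA2 a b T) ↔ (T.1 j).1 = 1 := by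
  show (if h' : (j : ℕ) < b then (T.1 ⟨(j : ℕ), h'⟩).1 = 1
        else T.2 ⟨(j : ℕ) - b, by omega⟩ = 1) ↔ _
  rw [dif_pos j.isLt]

lemma mem_invA2_u_ge (T : TabT a b) (k : Fin a) (h : b + (k : ℕ) < a + b) :
    (Sum.inl (⟨b + (k : ℕ), h⟩ : Fin (a + b)) ∈ invA2 a b T) ↔ T.2 k = 1 := by
  show (if h' : b + (k : ℕ) < b then (T.1 ⟨b + (k : ℕ), h'⟩).1 = 1
        else T.2 ⟨b + (k : ℕ) - b, by omega⟩ = 1) ↔ _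
  rw [dif_neg (by omega)]
  rw [T2_congr T (show ((⟨b + (k : ℕ) - b, by omega⟩ : Fin a) : ℕ) = (k : ℕ) by
    simp)]

lemma mem_invA2_t (T : TabT a b) (j : Fin b) :
    (Sum.inr (Sum.inl j) ∈ invA2 a b T) ↔ (T.1 j).2 ≤ 2 := Iff.rfl

lemma mem_invA2_w (T : TabT a b) (k : Fin a) :
    (Sum.inr (Sum.inr k) ∈ invA2 a b T) ↔ T.2 k ≤ 2 := Iff.rfl

lemma invA2_step (T : TabT a b) (hT : T ∈ SA2 a b) :
    ∀ x y, relA2 a b x y → y ∈ invA2 a b T → x ∈ invA2 a b T := by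
  obtain ⟨h1, h2, h3, h4, h5⟩ := hT
  rintro (i | j | k) (i' | j' | k') hr hm
  · -- u_i < u_{i'}
    have hr' : (i' : ℕ) = (i : ℕ) + 1 := hr
    show (if h : (i : ℕ) < b then (T.1 ⟨(i : ℕ), h⟩).1 = 1
          else T.2 ⟨(i : ℕ) - b, by have := i.isLt; omega⟩ = 1)
    have hm' : (if h : (i' : ℕ) < b then (T.1 ⟨(i' : ℕ), h⟩).1 = 1
          else T.2 ⟨(i' : ℕ) - b, by have := i'.isLt; omega⟩ = 1) := hm
    by_cases hb : (i : ℕ) < b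
    · rw [dif_pos hb]
      by_cases hb' : (i' : ℕ) < b
      · rw [dif_pos hb'] at hm'
        have := (h3 ⟨(i : ℕ), hb⟩ ⟨(i' : ℕ), hb'⟩ (Fin.mk_le_mk.mpr (by omega))).1
        have h1' := (h1 ⟨(i : ℕ), hb⟩).1
        omega
      · rw [dif_neg hb'] at hm'
        have := h5 ⟨(i : ℕ), hb⟩ ⟨(i' : ℕ) - b, by have := i'.isLt; omega⟩
        have h1' := (h1 ⟨(i : ℕ), hb⟩).1
        omega
    · rw [dif_neg hb]
      have hb' : ¬ (i' : ℕ) < b := by omega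
      rw [dif_neg hb'] at hm'
      have := h4 ⟨(i : ℕ) - b, by have := i.isLt; omega⟩
        ⟨(i' : ℕ) - b, by have := i'.isLt; omega⟩ (Fin.mk_le_mk.mpr (by omega))
      have h2' := (h2 ⟨(i : ℕ) - b, by have := i.isLt; omega⟩).1
      omega
  · -- u_i < t_{j'}
    have hr' : (i : ℕ) = (j' : ℕ) := hr
    have hm' : (T.1 j').2 ≤ 2 := hm
    show (if h : (i : ℕ) < b then (T.1 ⟨(i : ℕ), h⟩).1 = 1
          else T.2 ⟨(i : ℕ) - b, by have := i.isLt; omega⟩ = 1)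
    have hb : (i : ℕ) < b := by have := j'.isLt; omega
    rw [dif_pos hb]
    rw [Prod.ext_iff.1 (T1_congr T (show ((⟨(i : ℕ), hb⟩ : Fin b) : ℕ) = (j' : ℕ) from hr'))|>.1]
    have := (h1 j').1
    have := (h1 j').2.2.2.2
    omega
  · exact hr.elim
  · exact hr.elim
  · -- t_j < t_{j'}
    have hr' : (j' : ℕ) = (j : ℕ) + 1 := hr
    have hm' : (T.1 j').2 ≤ 2 := hm
    show (T.1 j).2 ≤ 2
    have := (h3 j j' (Fin.le_def.mpr (by omega))).2
    omega
  · exact hr.elim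
  · -- w_k < u_{i'}
    have hr' : (i' : ℕ) = b + (k : ℕ) := hr
    show T.2 k ≤ 2
    have hm' : (if h : (i' : ℕ) < b then (T.1 ⟨(i' : ℕ), h⟩).1 = 1
          else T.2 ⟨(i' : ℕ) - b, by have := i'.isLt; omega⟩ = 1) := hm
    rw [dif_neg (by omega)] at hm'
    rw [T2_congr T (show ((⟨(i' : ℕ) - b, by have := i'.isLt; omega⟩ : Fin a) : ℕ) = (k : ℕ) by simp; omega)] at hm'
    omega
  · exact hr.elim
  · -- w_k < w_{k'}
    have hr' : (k' : ℕ) = (k : ℕ) + 1 := hr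
    have hm' : T.2 k' ≤ 2 := hm
    show T.2 k ≤ 2
    have := h4 k k' (Fin.le_def.mpr (by omega))
    omega

end A2Aux2


section A2Aux3

variable {a b : ℕ} {I : Set (VA2 a b)}

open Classical in
lemma tab_two' (hI : ∀ x y, relA2 a b x y → y ∈ I → x ∈ I) (j : Fin b)
    (i : Fin (a + b)) (h : (i : ℕ) = (j : ℕ)) :
    (tabA2 a b I).1 j =
      ((if Sum.inl i ∈ I then 1 else 2),
       (if Sum.inr (Sum.inl j) ∈ I then 2 else 3)) := by
  rw [show i = (⟨(j : ℕ), lt_of_lt_of_le j.isLt (Nat.le_add_left b a)⟩ : Fin (a + b)) from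
    Fin.ext h]
  exact tab_two hI j _

open Classical in
lemma tab_one' (hI : ∀ x y, relA2 a b x y → y ∈ I → x ∈ I) (k : Fin a)
    (i : Fin (a + b)) (h : (i : ℕ) = b + (k : ℕ)) :
    (tabA2 a b I).2 k =
      (if Sum.inl i ∈ I then 1
       else if Sum.inr (Sum.inr k) ∈ I then 2 else 3) := by
  rw [show i = (⟨b + (k : ℕ), h ▸ i.isLt⟩ : Fin (a + b)) from Fin.ext h]
  exact tab_one hI k _

lemma mem_invA2_u_lt' (T : TabT a b) (i : Fin (a + b)) (j : Fin b)
    (h : (i : ℕ) = (j : ℕ)) :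
    (Sum.inl i ∈ invA2 a b T) ↔ (T.1 j).1 = 1 := by
  rw [show i = (⟨(j : ℕ), lt_of_lt_of_le j.isLt (Nat.le_add_left b a)⟩ : Fin (a + b)) from
    Fin.ext h]
  exact mem_invA2_u_lt T j _

lemma mem_invA2_u_ge' (T : TabT a b) (i : Fin (a + b)) (k : Fin a)
    (h : (i : ℕ) = b + (k : ℕ)) :
    (Sum.inl i ∈ invA2 a b T) ↔ T.2 k = 1 := by
  rw [show i = (⟨b + (k : ℕ), h ▸ i.isLt⟩ : Fin (a + b)) from Fin.ext h]
  exact mem_invA2_u_ge T k _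

open Classical in
lemma tabA2_mem (hI : ∀ x y, relA2 a b x y → y ∈ I → x ∈ I) :
    tabA2 a b I ∈ SA2 a b := by
  have hj : ∀ j : Fin b, (j : ℕ) < a + b :=
    fun j => lt_of_lt_of_le j.isLt (Nat.le_add_left b a)
  have hk : ∀ k : Fin a, b + (k : ℕ) < a + b := fun k => by have := k.isLt; omega
  refine ⟨?_, ?_, ?_, ?_, ?_⟩
  · intro j
    rw [tab_two hI j (hj j)]
    by_cases ht : Sum.inr (Sum.inl j) ∈ I
    · have hu := step_tu hI j (hj j) ht
      simp [hu, ht]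
    · by_cases hu : Sum.inl (⟨(j : ℕ), hj j⟩ : Fin (a + b)) ∈ I <;> simp [hu, ht]
  · intro k
    rw [tab_one hI k (hk k)]
    split_ifs <;> simp
  · intro j j' hle
    have hnat : (j : ℕ) ≤ (j' : ℕ) := Fin.le_def.mp hle
    rw [tab_two hI j (hj j), tab_two hI j' (hj j')]
    constructor
    · show (if _ then _ else _) ≤ (if _ then _ else _)
      by_cases hq : Sum.inl (⟨(j' : ℕ), hj j'⟩ : Fin (a + b)) ∈ I
      · have hp : Sum.inl (⟨(j : ℕ), hj j⟩ : Fin (a + b)) ∈ I :=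
          chain_u hI ((j' : ℕ) - (j : ℕ)) _ _
            (by show (j' : ℕ) = (j : ℕ) + ((j' : ℕ) - (j : ℕ)); omega) hq
        simp [hp, hq]
      · simp only [if_neg hq]
        split_ifs <;> omega
    · show (if _ then _ else _) ≤ (if _ then _ else _)
      by_cases hq : Sum.inr (Sum.inl j') ∈ I
      · have hp : Sum.inr (Sum.inl j) ∈ I :=
          chain_t hI ((j' : ℕ) - (j : ℕ)) j j' (by omega) hq
        simp [hp, hq]
      · simp only [if_neg hq]
        split_ifs <;> omega
  · intro k k' hle
    have hnat : (k : ℕ) ≤ (k' : ℕ) := Fin.le_def.mp hle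
    rw [tab_one hI k (hk k), tab_one hI k' (hk k')]
    by_cases hu' : Sum.inl (⟨b + (k' : ℕ), hk k'⟩ : Fin (a + b)) ∈ I
    · have hu : Sum.inl (⟨b + (k : ℕ), hk k⟩ : Fin (a + b)) ∈ I :=
        chain_u hI ((k' : ℕ) - (k : ℕ)) _ _
          (by show b + (k' : ℕ) = b + (k : ℕ) + ((k' : ℕ) - (k : ℕ)); omega) hu'
      simp [hu, hu']
    · by_cases hw' : Sum.inr (Sum.inr k') ∈ I
      · have hw : Sum.inr (Sum.inr k) ∈ I :=
          chain_w hI ((k' : ℕ) - (k : ℕ)) k k' (by omega) hw'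
        simp only [if_neg hu', if_pos hw']
        split_ifs <;> omega
      · simp only [if_neg hu', if_neg hw']
        split_ifs <;> omega
  · intro j k
    rw [tab_two hI j (hj j), tab_one hI k (hk k)]
    show (if _ then _ else _) ≤ (if _ then _ else _)
    by_cases hu' : Sum.inl (⟨b + (k : ℕ), hk k⟩ : Fin (a + b)) ∈ I
    · have hu : Sum.inl (⟨(j : ℕ), hj j⟩ : Fin (a + b)) ∈ I :=
        chain_u hI (b + (k : ℕ) - (j : ℕ)) _ _
          (by show b + (k : ℕ) = (j : ℕ) + (b + (k : ℕ) - (j : ℕ)); have := j.isLt; omega) hu'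
      simp [hu, hu']
    · simp only [if_neg hu']
      split_ifs <;> omega

lemma tab_invA2 (T : TabT a b) (hT : T ∈ SA2 a b) : tabA2 a b (invA2 a b T) = T := by
  classical
  have hstep := invA2_step T hT
  obtain ⟨h1, h2, h3, h4, h5⟩ := hT
  have hj : ∀ j : Fin b, (j : ℕ) < a + b :=
    fun j => lt_of_lt_of_le j.isLt (Nat.le_add_left b a)
  have hk : ∀ k : Fin a, b + (k : ℕ) < a + b := fun k => by have := k.isLt; omega
  refine Prod.ext (funext fun j => ?_) (funext fun k => ?_)
  · rw [tab_two hstep j (hj j)]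
    refine Prod.ext ?_ ?_
    · show (if Sum.inl (⟨(j : ℕ), hj j⟩ : Fin (a + b)) ∈ invA2 a b T then 1 else 2) = (T.1 j).1
      by_cases h : (T.1 j).1 = 1
      · rw [if_pos ((mem_invA2_u_lt T j (hj j)).mpr h), h]
      · rw [if_neg (fun hm => h ((mem_invA2_u_lt T j (hj j)).mp hm))]
        have := h1 j
        omega
    · show (if Sum.inr (Sum.inl j) ∈ invA2 a b T then 2 else 3) = (T.1 j).2
      have hb := h1 j
      by_cases h : (T.1 j).2 ≤ 2
      · rw [if_pos ((mem_invA2_t T j).mpr h)]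
        omega
      · rw [if_neg (fun hm => h ((mem_invA2_t T j).mp hm))]
        omega
  · rw [tab_one hstep k (hk k)]
    have hb := h2 k
    by_cases h : T.2 k = 1
    · rw [if_pos ((mem_invA2_u_ge T k (hk k)).mpr h), h]
    · rw [if_neg (fun hm => h ((mem_invA2_u_ge T k (hk k)).mp hm))]
      by_cases h' : T.2 k ≤ 2
      · rw [if_pos ((mem_invA2_w T k).mpr h')]
        omega
      · rw [if_neg (fun hm => h' ((mem_invA2_w T k).mp hm))]
        omega

lemma invA2_tabA2 (hI : ∀ x y, relA2 a b x y → y ∈ I → x ∈ I) :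
    invA2 a b (tabA2 a b I) = I := by
  classical
  ext x
  cases x with
  | inl i =>
    by_cases hb : (i : ℕ) < b
    · rw [mem_invA2_u_lt' (tabA2 a b I) i ⟨(i : ℕ), hb⟩ rfl,
        tab_two' hI ⟨(i : ℕ), hb⟩ i rfl]
      by_cases hm : Sum.inl i ∈ I <;> simp [hm]
    · have hpf : (i : ℕ) - b < a := by have := i.isLt; omega
      have hval : (i : ℕ) = b + (((⟨(i : ℕ) - b, hpf⟩ : Fin a)) : ℕ) :=
        (Nat.add_sub_cancel' (Nat.le_of_not_lt hb)).symm
      rw [mem_invA2_u_ge' (tabA2 a b I) i ⟨(i : ℕ) - b, hpf⟩ hval,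
        tab_one' hI ⟨(i : ℕ) - b, hpf⟩ i hval]
      by_cases hm : Sum.inl i ∈ I
      · simp [hm]
      · simp only [if_neg hm, iff_false]
        · split_ifs <;> simp [hm]
  | inr x =>
    cases x with
    | inl j =>
      rw [mem_invA2_t (tabA2 a b I) j,
        tab_two hI j (lt_of_lt_of_le j.isLt (Nat.le_add_left b a))]
      by_cases hm : Sum.inr (Sum.inl j) ∈ I <;> simp [hm]
    | inr k =>
      rw [mem_invA2_w (tabA2 a b I) k,
        tab_one hI k (by have := k.isLt; omega)]
      by_cases hu : Sum.inl (⟨b + (k : ℕ), by have := k.isLt; omega⟩ : Fin (a + b)) ∈ I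
      · have hw := step_uw hI k (by have := k.isLt; omega) hu
        simp [hu, hw]
      · simp only [if_neg hu]
        by_cases hw : Sum.inr (Sum.inr k) ∈ I <;> simp [hw]

end A2Aux3


/-- The map `I ↦ tableau(I)` is a bijection from the set of order ideals of the
`A2`-semistandard poset `P_A2^{βα}(a,b)` onto the set `S_A2(a,b)` of
`A2`-semistandard tableaux of shape `(a,b)`. -/
theorem A2_ideals_biject_with_tableaux (a b : ℕ) :
    Set.BijOn (tabA2 a b) {I : Set (VA2 a b) | IsIdealOf (relA2 a b) I} (SA2 a b) := by
  refine ⟨?_, ?_, ?_⟩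
  · intro I hI
    exact tabA2_mem ((isIdealOf_iff_step _ _).1 hI)
  · intro I hI I' hI' heq
    have hs := (isIdealOf_iff_step (relA2 a b) I).1 hI
    have hs' := (isIdealOf_iff_step (relA2 a b) I').1 hI'
    calc I = invA2 a b (tabA2 a b I) := (invA2_tabA2 hs).symm
      _ = invA2 a b (tabA2 a b I') := by rw [heq]
      _ = I' := invA2_tabA2 hs'
  · intro T hT
    exact ⟨invA2 a b T, (isIdealOf_iff_step _ _).2 (invA2_step T hT), tab_invA2 T hT⟩
end

section
/- Fix integers a, b ≥ 0 and let P be the poset with elements w_{1,j}, w_{2,j}, w_{3,j}, w_{4,j} for 1 ≤ j ≤ b and z_{1,j}, z_{2,j}, z_{3,j} for b+1 ≤ j ≤ a+b, whose partial order is generated by: the chain relations w_{4,j} < w_{3,j} < w_{2,j} < w_{1,j} for 1 ≤ j ≤ b and z_{3,j} < z_{2,j} < z_{1,j} for b+1 ≤ j ≤ a+b; the relations w_{4,j} < w_{4,j+1}, w_{2,j} < w_{3,j+1}, and w_{1,j} < w_{1,j+1} for 1 ≤ j ≤ b−1; the relations w_{4,b} < z_{2,b+1} and w_{2,b} < z_{1,b+1}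 when a ≥ 1 and b ≥ 1; and the relations z_{3,j} < z_{3,j+1}, z_{2,j} < z_{2,j+1}, and z_{1,j} < z_{1,j+1} for b+1 ≤ j ≤ a+b−1 (this is the C2-semistandard poset P_{C2}^{βα}(a,b)). For an order ideal I of P define tableau(I) to be the tableau of shape (a,b) whose j-th column, for 1 ≤ j ≤ b, is (3,4), (2,4), (2,3), (1,3), (1,2) according as the cardinality of I ∩ {w_{1,j}, w_{2,j}, w_{3,j}, w_{4,j}} is 0, 1, 2, 3, 4, and whose j-th column, for b+1 ≤ j ≤ a+b, is (4), (3), (2), (1) according as the cardinality of I ∩ {z_{1,j}, z_{2,j}, z_{3,j}} is 0, 1, 2, 3. Then the map I ↦ tableau(I) is a bijection from the set of order ideals of P onto S_C2(a,b). -/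
/-- The elements of the `C2`-semistandard poset `P_C2^{βα}(a,b)`:
`Sum.inl (i, j)` is `w_{i+1, j+1}` (`i : Fin 4`, `j : Fin b`) and
`Sum.inr (i, j)` is `z_{i+1, b+1+j}` (`i : Fin 3`, `j : Fin a`). -/
abbrev VC2 (a b : ℕ) : Type := (Fin 4 × Fin b) ⊕ (Fin 3 × Fin a)

/-- The generating relations of the `C2`-semistandard poset `P_C2^{βα}(a,b)`:
`w_{4,j} < w_{3,j} < w_{2,j} < w_{1,j}`, `z_{3,j} < z_{2,j} < z_{1,j}`,
`w_{4,j} < w_{4,j+1}`, `w_{2,j} < w_{3,j+1}`, `w_{1,j} < w_{1,j+1}`,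
`w_{4,b} < z_{2,b+1}`, `w_{2,b} < z_{1,b+1}`, and `z_{i,j} < z_{i,j+1}`. -/
def relC2 (a b : ℕ) : VC2 a b → VC2 a b → Prop := fun x y =>
  match x, y with
  | Sum.inl (i, j), Sum.inl (i', j') =>
      ((j : ℕ) = (j' : ℕ) ∧ (i : ℕ) = (i' : ℕ) + 1) ∨
      ((j' : ℕ) = (j : ℕ) + 1 ∧
        (((i : ℕ) = 3 ∧ (i' : ℕ) = 3) ∨ ((i : ℕ) = 1 ∧ (i' : ℕ) = 2) ∨
          ((i : ℕ) = 0 ∧ (i' : ℕ) = 0)))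
  | Sum.inl (i, j), Sum.inr (i', j') =>
      (j : ℕ) + 1 = b ∧ (j' : ℕ) = 0 ∧
        (((i : ℕ) = 3 ∧ (i' : ℕ) = 1) ∨ ((i : ℕ) = 1 ∧ (i' : ℕ) = 0))
  | Sum.inr (i, j), Sum.inr (i', j') =>
      ((j : ℕ) = (j' : ℕ) ∧ (i : ℕ) = (i' : ℕ) + 1) ∨
      ((j' : ℕ) = (j : ℕ) + 1 ∧ (i : ℕ) = (i' : ℕ))
  | Sum.inr _, Sum.inl _ => False

/-- The tableau associated to an order ideal `I` of `P_C2^{βα}(a,b)`: the `j`-th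
length-two column is `(3,4)`, `(2,4)`, `(2,3)`, `(1,3)`, `(1,2)` according as
`|I ∩ {w_{1,j}, w_{2,j}, w_{3,j}, w_{4,j}}|` is `0`, `1`, `2`, `3`, `4`, and the
`(b+k)`-th (length-one) column is `(4)`, `(3)`, `(2)`, `(1)` according as
`|I ∩ {z_{1,b+k}, z_{2,b+k}, z_{3,b+k}}|` is `0`, `1`, `2`, `3`. -/
noncomputable def tabC2 (a b : ℕ) (I : Set (VC2 a b)) : TabT a b :=
  (fun j : Fin b =>
    (fun n : ℕ =>
        if n = 0 then ((3 : ℕ), (4 : ℕ)) else if n = 1 then (2, 4)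
        else if n = 2 then (2, 3) else if n = 3 then (1, 3) else (1, 2))
      ((I ∩ {Sum.inl ((0 : Fin 4), j), Sum.inl ((1 : Fin 4), j),
             Sum.inl ((2 : Fin 4), j), Sum.inl ((3 : Fin 4), j)}).ncard),
   fun k : Fin a =>
    (fun n : ℕ =>
        if n = 0 then (4 : ℕ) else if n = 1 then 3 else if n = 2 then 2 else 1)
      ((I ∩ {Sum.inr ((0 : Fin 3), k), Sum.inr ((1 : Fin 3), k),
             Sum.inr ((2 : Fin 3), k)}).ncard))


section AuxC2

open Relation

variable {V : Type*} {r : V → V → Prop} {I : Set V}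

lemma isIdealOf_of_step (h : ∀ x y, r x y → y ∈ I → x ∈ I) : IsIdealOf r I := by
  intro x y hxy
  induction hxy with
  | refl => exact id
  | tail _ hby ih => exact fun hy => ih (h _ _ hby hy)

lemma rtg_up (f : ℕ → V) {m n : ℕ} (h : m ≤ n)
    (step : ∀ k, m ≤ k → k < n → ReflTransGen r (f k) (f (k + 1))) :
    ReflTransGen r (f m) (f n) := by
  induction n, h using Nat.le_induction with
  | base => exact .refl
  | succ n hmn ih =>
      exact (ih fun k hk hk' => step k hk (by omega)).trans (step n hmn (by omega))

lemma rtg_down (f : ℕ → V) {m n : ℕ} (h : m ≤ n)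
    (step : ∀ k, m ≤ k → k < n → ReflTransGen r (f (k + 1)) (f k)) :
    ReflTransGen r (f n) (f m) := by
  induction n, h using Nat.le_induction with
  | base => exact .refl
  | succ n hmn ih =>
      exact (step n hmn (by omega)).trans (ih fun k hk hk' => step k hk (by omega))

end AuxC2

section ChainsC2

variable {a b : ℕ} {I : Set (VC2 a b)}

/-- Down-closure within a `w`-column. -/
lemma colW (hI : IsIdealOf (relC2 a b) I) {j : Fin b} {i1 i2 : Fin 4}
    (h : (i1 : ℕ) ≤ (i2 : ℕ)) (hm : Sum.inl (i1, j) ∈ I) : Sum.inl (i2, j) ∈ I := by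
  have h1 := i1.isLt; have h2 := i2.isLt
  have key : Relation.ReflTransGen (relC2 a b)
      (Sum.inl ((⟨min (i2 : ℕ) 3, by omega⟩ : Fin 4), j))
      (Sum.inl ((⟨min (i1 : ℕ) 3, by omega⟩ : Fin 4), j)) := by
    refine rtg_down (fun t => Sum.inl ((⟨min t 3, by omega⟩ : Fin 4), j)) h ?_
    intro k hk hk'
    exact .single (Or.inl ⟨rfl, by simp only; omega⟩)
  have e1 : (⟨min (i1 : ℕ) 3, by omega⟩ : Fin 4) = i1 := by
    apply Fin.val_injective; simp only; omega
  have e2 : (⟨min (i2 : ℕ) 3, by omega⟩ : Fin 4) = i2 := by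
    apply Fin.val_injective; simp only; omega
  rw [e1, e2] at key
  exact hI _ _ key hm

/-- Down-closure within a `z`-column. -/
lemma colZ (hI : IsIdealOf (relC2 a b) I) {k : Fin a} {i1 i2 : Fin 3}
    (h : (i1 : ℕ) ≤ (i2 : ℕ)) (hm : Sum.inr (i1, k) ∈ I) : Sum.inr (i2, k) ∈ I := by
  have h1 := i1.isLt; have h2 := i2.isLt
  have key : Relation.ReflTransGen (relC2 a b)
      (Sum.inr ((⟨min (i2 : ℕ) 2, by omega⟩ : Fin 3), k))
      (Sum.inr ((⟨min (i1 : ℕ) 2, by omega⟩ : Fin 3), k)) := by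
    refine rtg_down (fun t => Sum.inr ((⟨min t 2, by omega⟩ : Fin 3), k)) h ?_
    intro k' hk hk'
    exact .single (Or.inl ⟨rfl, by simp only; omega⟩)
  have e1 : (⟨min (i1 : ℕ) 2, by omega⟩ : Fin 3) = i1 := by
    apply Fin.val_injective; simp only; omega
  have e2 : (⟨min (i2 : ℕ) 2, by omega⟩ : Fin 3) = i2 := by
    apply Fin.val_injective; simp only; omega
  rw [e1, e2] at key
  exact hI _ _ key hm

/-- Back-closure along row 1 (`i = 0`) or row 4 (`i = 3`) of the `w`-columns. -/
lemma rowW (hI : IsIdealOf (relC2 a b) I) {j j' : Fin b} {i : Fin 4}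
    (hii : (i : ℕ) = 0 ∨ (i : ℕ) = 3) (h : (j : ℕ) ≤ (j' : ℕ))
    (hm : Sum.inl (i, j') ∈ I) : Sum.inl (i, j) ∈ I := by
  have hb := j.isLt; have hb' := j'.isLt
  have key : Relation.ReflTransGen (relC2 a b)
      (Sum.inl (i, (⟨min (j : ℕ) (b - 1), by omega⟩ : Fin b)))
      (Sum.inl (i, (⟨min (j' : ℕ) (b - 1), by omega⟩ : Fin b))) := by
    refine rtg_up (fun t => Sum.inl (i, (⟨min t (b - 1), by omega⟩ : Fin b))) h ?_
    intro k hk hk'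
    exact .single (Or.inr ⟨by simp only; omega, by omega⟩)
  have e1 : (⟨min (j : ℕ) (b - 1), by omega⟩ : Fin b) = j := by
    apply Fin.val_injective; simp only; omega
  have e2 : (⟨min (j' : ℕ) (b - 1), by omega⟩ : Fin b) = j' := by
    apply Fin.val_injective; simp only; omega
  rw [e1, e2] at key
  exact hI _ _ key hm

/-- Back-closure along a row of the `z`-columns. -/
lemma rowZ (hI : IsIdealOf (relC2 a b) I) {k k' : Fin a} {i : Fin 3}
    (h : (k : ℕ) ≤ (k' : ℕ)) (hm : Sum.inr (i, k') ∈ I) : Sum.inr (i, k) ∈ I := by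
  have hb := k.isLt; have hb' := k'.isLt
  have key : Relation.ReflTransGen (relC2 a b)
      (Sum.inr (i, (⟨min (k : ℕ) (a - 1), by omega⟩ : Fin a)))
      (Sum.inr (i, (⟨min (k' : ℕ) (a - 1), by omega⟩ : Fin a))) := by
    refine rtg_up (fun t => Sum.inr (i, (⟨min t (a - 1), by omega⟩ : Fin a))) h ?_
    intro t ht ht'
    exact .single (Or.inr ⟨by simp only; omega, rfl⟩)
  have e1 : (⟨min (k : ℕ) (a - 1), by omega⟩ : Fin a) = k := by
    apply Fin.val_injective; simp only; omega
  have e2 : (⟨min (k' : ℕ) (a - 1), by omega⟩ : Fin a) = k' := by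
    apply Fin.val_injective; simp only; omega
  rw [e1, e2] at key
  exact hI _ _ key hm

/-- `w_{2,j} ∈ I` whenever `w_{3,j'} ∈ I` for some `j' > j`. -/
lemma rowMid (hI : IsIdealOf (relC2 a b) I) {j j' : Fin b}
    (h : (j : ℕ) < (j' : ℕ)) (hm : Sum.inl ((2 : Fin 4), j') ∈ I) :
    Sum.inl ((1 : Fin 4), j) ∈ I := by
  have hb := j.isLt; have hb' := j'.isLt
  have chain : Relation.ReflTransGen (relC2 a b)
      (Sum.inl ((1 : Fin 4), (⟨min (j : ℕ) (b - 1), by omega⟩ : Fin b)))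
      (Sum.inl ((1 : Fin 4), (⟨min ((j' : ℕ) - 1) (b - 1), by omega⟩ : Fin b))) := by
    refine rtg_up (fun t => Sum.inl ((1 : Fin 4), (⟨min t (b - 1), by omega⟩ : Fin b)))
      (by omega : (j : ℕ) ≤ (j' : ℕ) - 1) ?_
    intro k hk hk'
    refine Relation.ReflTransGen.head (b := Sum.inl ((2 : Fin 4),
        (⟨min (k + 1) (b - 1), by omega⟩ : Fin b))) ?_ (.single ?_)
    · exact Or.inr ⟨by simp only; omega, by omega⟩
    · exact Or.inl ⟨rfl, by omega⟩
  have laststep : relC2 a b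
      (Sum.inl ((1 : Fin 4), (⟨min ((j' : ℕ) - 1) (b - 1), by omega⟩ : Fin b)))
      (Sum.inl ((2 : Fin 4), j')) := Or.inr ⟨by simp only; omega, by omega⟩
  have e1 : (⟨min (j : ℕ) (b - 1), by omega⟩ : Fin b) = j := by
    apply Fin.val_injective; simp only; omega
  rw [e1] at chain
  exact hI _ _ (chain.trans (.single laststep)) hm

/-- `w_{4,j} ∈ I` whenever `z_{2,k} ∈ I`. -/
lemma crossE (hI : IsIdealOf (relC2 a b) I) (j : Fin b) {k : Fin a}
    (hm : Sum.inr ((1 : Fin 3), k) ∈ I) : Sum.inl ((3 : Fin 4), j) ∈ I := by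
  have hb := j.isLt
  have h1 : Sum.inr ((1 : Fin 3), (⟨0, k.pos⟩ : Fin a)) ∈ I :=
    rowZ hI (show (0 : ℕ) ≤ (k : ℕ) by omega) hm
  have step : relC2 a b (Sum.inl ((3 : Fin 4), (⟨b - 1, by omega⟩ : Fin b)))
      (Sum.inr ((1 : Fin 3), (⟨0, k.pos⟩ : Fin a))) :=
    ⟨show b - 1 + 1 = b by omega, rfl, Or.inl ⟨rfl, rfl⟩⟩
  have h2 : Sum.inl ((3 : Fin 4), (⟨b - 1, by omega⟩ : Fin b)) ∈ I :=
    hI _ _ (.single step) h1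
  exact rowW hI (Or.inr rfl) (show (j : ℕ) ≤ b - 1 by omega) h2

/-- `w_{2,j} ∈ I` whenever `z_{1,k} ∈ I`. -/
lemma crossF (hI : IsIdealOf (relC2 a b) I) (j : Fin b) {k : Fin a}
    (hm : Sum.inr ((0 : Fin 3), k) ∈ I) : Sum.inl ((1 : Fin 4), j) ∈ I := by
  have hb := j.isLt
  have h1 : Sum.inr ((0 : Fin 3), (⟨0, k.pos⟩ : Fin a)) ∈ I :=
    rowZ hI (show (0 : ℕ) ≤ (k : ℕ) by omega) hm
  have step : relC2 a b (Sum.inl ((1 : Fin 4), (⟨b - 1, by omega⟩ : Fin b)))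
      (Sum.inr ((0 : Fin 3), (⟨0, k.pos⟩ : Fin a))) :=
    ⟨show b - 1 + 1 = b by omega, rfl, Or.inr ⟨rfl, rfl⟩⟩
  have h2 : Sum.inl ((1 : Fin 4), (⟨b - 1, by omega⟩ : Fin b)) ∈ I :=
    hI _ _ (.single step) h1
  rcases Nat.lt_or_ge (j : ℕ) (b - 1) with h | h
  · exact rowMid hI (show (j : ℕ) < b - 1 by omega) (colW hI (by decide) h2)
  · have : j = (⟨b - 1, by omega⟩ : Fin b) := by
      apply Fin.val_injective; show (j : ℕ) = b - 1; omega
    rw [this]; exact h2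

end ChainsC2


section CountC2

def colmap (n : ℕ) : ℕ × ℕ :=
  if n = 0 then ((3 : ℕ), (4 : ℕ)) else if n = 1 then (2, 4)
  else if n = 2 then (2, 3) else if n = 3 then (1, 3) else (1, 2)

def emap (n : ℕ) : ℕ :=
  if n = 0 then (4 : ℕ) else if n = 1 then 3 else if n = 2 then 2 else 1

def cnum (p : ℕ × ℕ) : ℕ :=
  if p = (3, 4) then 0 else if p = (2, 4) then 1 else if p = (2, 3) then 2
  else if p = (1, 3) then 3 else 4

noncomputable def cidx (a b : ℕ) (I : Set (VC2 a b)) (j : Fin b) : ℕ :=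
  (I ∩ {Sum.inl ((0 : Fin 4), j), Sum.inl ((1 : Fin 4), j),
        Sum.inl ((2 : Fin 4), j), Sum.inl ((3 : Fin 4), j)}).ncard

noncomputable def didx (a b : ℕ) (I : Set (VC2 a b)) (k : Fin a) : ℕ :=
  (I ∩ {Sum.inr ((0 : Fin 3), k), Sum.inr ((1 : Fin 3), k),
        Sum.inr ((2 : Fin 3), k)}).ncard

lemma tabC2_fst (a b : ℕ) (I : Set (VC2 a b)) (j : Fin b) :
    (tabC2 a b I).1 j = colmap (cidx a b I j) := rfl

lemma tabC2_snd (a b : ℕ) (I : Set (VC2 a b)) (k : Fin a) :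
    (tabC2 a b I).2 k = emap (didx a b I k) := rfl

lemma ncard_inter_w {a b : ℕ} (I : Set (VC2 a b)) (j : Fin b) (c : ℕ) (hc : c ≤ 4)
    (h : ∀ i : Fin 4, Sum.inl (i, j) ∈ I ↔ 4 ≤ (i : ℕ) + c) :
    cidx a b I j = c := by
  have hcase : c = 0 ∨ c = 1 ∨ c = 2 ∨ c = 3 ∨ c = 4 := by omega
  rcases hcase with rfl | rfl | rfl | rfl | rfl
  · have hS : I ∩ {Sum.inl ((0 : Fin 4), j), Sum.inl ((1 : Fin 4), j),
        Sum.inl ((2 : Fin 4), j), Sum.inl ((3 : Fin 4), j)} = ∅ := by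
      ext x
      simp only [Set.mem_inter_iff, Set.mem_insert_iff, Set.mem_singleton_iff,
        Set.mem_empty_iff_false, iff_false, not_and]
      rintro hxI (rfl | rfl | rfl | rfl) <;>
        exact absurd ((h _).mp hxI) (by decide)
    rw [cidx, hS, Set.ncard_empty]
  · have hS : I ∩ {Sum.inl ((0 : Fin 4), j), Sum.inl ((1 : Fin 4), j),
        Sum.inl ((2 : Fin 4), j), Sum.inl ((3 : Fin 4), j)} =
        {Sum.inl ((3 : Fin 4), j)} := by
      ext x
      simp only [Set.mem_inter_iff, Set.mem_insert_iff, Set.mem_singleton_iff]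
      constructor
      · rintro ⟨hxI, rfl | rfl | rfl | rfl⟩
        · exact absurd ((h _).mp hxI) (by decide)
        · exact absurd ((h _).mp hxI) (by decide)
        · exact absurd ((h _).mp hxI) (by decide)
        · rfl
      · rintro rfl
        exact ⟨(h _).mpr (by decide), by simp⟩
    rw [cidx, hS, Set.ncard_singleton]
  · have hS : I ∩ {Sum.inl ((0 : Fin 4), j), Sum.inl ((1 : Fin 4), j),
        Sum.inl ((2 : Fin 4), j), Sum.inl ((3 : Fin 4), j)} =
        {Sum.inl ((2 : Fin 4), j), Sum.inl ((3 : Fin 4), j)} := by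
      ext x
      simp only [Set.mem_inter_iff, Set.mem_insert_iff, Set.mem_singleton_iff]
      constructor
      · rintro ⟨hxI, rfl | rfl | rfl | rfl⟩
        · exact absurd ((h _).mp hxI) (by decide)
        · exact absurd ((h _).mp hxI) (by decide)
        · exact Or.inl rfl
        · exact Or.inr rfl
      · rintro (rfl | rfl)
        · exact ⟨(h _).mpr (by decide), by simp⟩
        · exact ⟨(h _).mpr (by decide), by simp⟩
    rw [cidx, hS, Set.ncard_pair (by simp)]
  · have hS : I ∩ {Sum.inl ((0 : Fin 4), j), Sum.inl ((1 : Fin 4), j),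
        Sum.inl ((2 : Fin 4), j), Sum.inl ((3 : Fin 4), j)} =
        {Sum.inl ((1 : Fin 4), j), Sum.inl ((2 : Fin 4), j), Sum.inl ((3 : Fin 4), j)} := by
      ext x
      simp only [Set.mem_inter_iff, Set.mem_insert_iff, Set.mem_singleton_iff]
      constructor
      · rintro ⟨hxI, rfl | rfl | rfl | rfl⟩
        · exact absurd ((h _).mp hxI) (by decide)
        · exact Or.inl rfl
        · exact Or.inr (Or.inl rfl)
        · exact Or.inr (Or.inr rfl)
      · rintro (rfl | rfl | rfl)
        · exact ⟨(h _).mpr (by decide), by simp⟩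
        · exact ⟨(h _).mpr (by decide), by simp⟩
        · exact ⟨(h _).mpr (by decide), by simp⟩
    rw [cidx, hS, Set.ncard_insert_of_notMem (by simp), Set.ncard_pair (by simp)]
  · have hS : I ∩ {Sum.inl ((0 : Fin 4), j), Sum.inl ((1 : Fin 4), j),
        Sum.inl ((2 : Fin 4), j), Sum.inl ((3 : Fin 4), j)} =
        {Sum.inl ((0 : Fin 4), j), Sum.inl ((1 : Fin 4), j),
         Sum.inl ((2 : Fin 4), j), Sum.inl ((3 : Fin 4), j)} := by
      apply Set.inter_eq_right.mpr
      rintro x (rfl | rfl | rfl | rfl) <;> exact (h _).mpr (by decide)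
    rw [cidx, hS, Set.ncard_insert_of_notMem (by simp),
      Set.ncard_insert_of_notMem (by simp), Set.ncard_pair (by simp)]

lemma ncard_inter_z {a b : ℕ} (I : Set (VC2 a b)) (k : Fin a) (d : ℕ) (hd : d ≤ 3)
    (h : ∀ i : Fin 3, Sum.inr (i, k) ∈ I ↔ 3 ≤ (i : ℕ) + d) :
    didx a b I k = d := by
  have hcase : d = 0 ∨ d = 1 ∨ d = 2 ∨ d = 3 := by omega
  rcases hcase with rfl | rfl | rfl | rfl
  · have hS : I ∩ {Sum.inr ((0 : Fin 3), k), Sum.inr ((1 : Fin 3), k),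
        Sum.inr ((2 : Fin 3), k)} = ∅ := by
      ext x
      simp only [Set.mem_inter_iff, Set.mem_insert_iff, Set.mem_singleton_iff,
        Set.mem_empty_iff_false, iff_false, not_and]
      rintro hxI (rfl | rfl | rfl) <;> exact absurd ((h _).mp hxI) (by decide)
    rw [didx, hS, Set.ncard_empty]
  · have hS : I ∩ {Sum.inr ((0 : Fin 3), k), Sum.inr ((1 : Fin 3), k),
        Sum.inr ((2 : Fin 3), k)} = {Sum.inr ((2 : Fin 3), k)} := by
      ext x
      simp only [Set.mem_inter_iff, Set.mem_insert_iff, Set.mem_singleton_iff]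
      constructor
      · rintro ⟨hxI, rfl | rfl | rfl⟩
        · exact absurd ((h _).mp hxI) (by decide)
        · exact absurd ((h _).mp hxI) (by decide)
        · rfl
      · rintro rfl
        exact ⟨(h _).mpr (by decide), by simp⟩
    rw [didx, hS, Set.ncard_singleton]
  · have hS : I ∩ {Sum.inr ((0 : Fin 3), k), Sum.inr ((1 : Fin 3), k),
        Sum.inr ((2 : Fin 3), k)} = {Sum.inr ((1 : Fin 3), k), Sum.inr ((2 : Fin 3), k)} := by
      ext x
      simp only [Set.mem_inter_iff, Set.mem_insert_iff, Set.mem_singleton_iff]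
      constructor
      · rintro ⟨hxI, rfl | rfl | rfl⟩
        · exact absurd ((h _).mp hxI) (by decide)
        · exact Or.inl rfl
        · exact Or.inr rfl
      · rintro (rfl | rfl)
        · exact ⟨(h _).mpr (by decide), by simp⟩
        · exact ⟨(h _).mpr (by decide), by simp⟩
    rw [didx, hS, Set.ncard_pair (by simp)]
  · have hS : I ∩ {Sum.inr ((0 : Fin 3), k), Sum.inr ((1 : Fin 3), k),
        Sum.inr ((2 : Fin 3), k)} =
        {Sum.inr ((0 : Fin 3), k), Sum.inr ((1 : Fin 3), k), Sum.inr ((2 : Fin 3), k)} := by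
      apply Set.inter_eq_right.mpr
      rintro x (rfl | rfl | rfl) <;> exact (h _).mpr (by decide)
    rw [didx, hS, Set.ncard_insert_of_notMem (by simp), Set.ncard_pair (by simp)]

variable {a b : ℕ} {I : Set (VC2 a b)}

lemma existsW (hI : IsIdealOf (relC2 a b) I) (j : Fin b) :
    ∃ c ≤ 4, ∀ i : Fin 4, (Sum.inl (i, j) ∈ I ↔ 4 ≤ (i : ℕ) + c) := by
  by_cases h3 : Sum.inl ((3 : Fin 4), j) ∈ I
  · by_cases h2 : Sum.inl ((2 : Fin 4), j) ∈ I
    · by_cases h1 : Sum.inl ((1 : Fin 4), j) ∈ I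
      · by_cases h0 : Sum.inl ((0 : Fin 4), j) ∈ I
        · refine ⟨4, by omega, fun i => ⟨fun _ => by have := i.isLt; omega, fun _ => ?_⟩⟩
          exact colW hI (show (0 : ℕ) ≤ (i : ℕ) by omega) h0
        · refine ⟨3, by omega, fun i => ⟨fun hm => ?_, fun hge => ?_⟩⟩
          · by_contra hlt
            have hi0 : i = (0 : Fin 4) := by
              apply Fin.val_injective; show (i : ℕ) = 0; omega
            exact h0 (hi0 ▸ hm)
          · exact colW hI (show (1 : ℕ) ≤ (i : ℕ) by omega) h1
      · have h0 : Sum.inl ((0 : Fin 4), j) ∉ I := fun hh => h1 (colW hI (by decide) hh)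
        refine ⟨2, by omega, fun i => ⟨fun hm => ?_, fun hge => ?_⟩⟩
        · by_contra hlt
          have : i = (0 : Fin 4) ∨ i = (1 : Fin 4) := by
            have hi := i.isLt
            have : (i : ℕ) = 0 ∨ (i : ℕ) = 1 := by omega
            rcases this with h | h
            · exact Or.inl (Fin.val_injective h)
            · exact Or.inr (Fin.val_injective h)
          rcases this with rfl | rfl
          · exact h0 hm
          · exact h1 hm
        · exact colW hI (show (2 : ℕ) ≤ (i : ℕ) by omega) h2
    · have h1 : Sum.inl ((1 : Fin 4), j) ∉ I := fun hh => h2 (colW hI (by decide) hh)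
      have h0 : Sum.inl ((0 : Fin 4), j) ∉ I := fun hh => h2 (colW hI (by decide) hh)
      refine ⟨1, by omega, fun i => ⟨fun hm => ?_, fun hge => ?_⟩⟩
      · by_contra hlt
        have hi := i.isLt
        have : (i : ℕ) = 0 ∨ (i : ℕ) = 1 ∨ (i : ℕ) = 2 := by omega
        rcases this with h | h | h
        · exact h0 ((Fin.val_injective (a₂ := (0 : Fin 4)) h) ▸ hm)
        · exact h1 ((Fin.val_injective (a₂ := (1 : Fin 4)) h) ▸ hm)
        · exact h2 ((Fin.val_injective (a₂ := (2 : Fin 4)) h) ▸ hm)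
      · have : i = (3 : Fin 4) := by
          apply Fin.val_injective; show (i : ℕ) = 3; have := i.isLt; omega
        exact this ▸ h3
  · have hall : ∀ i : Fin 4, Sum.inl (i, j) ∉ I := fun i hh =>
      h3 (colW hI (show (i : ℕ) ≤ 3 by have := i.isLt; omega) hh)
    refine ⟨0, by omega, fun i => ⟨fun hm => absurd hm (hall i), fun hge => ?_⟩⟩
    have := i.isLt; omega

lemma existsZ (hI : IsIdealOf (relC2 a b) I) (k : Fin a) :
    ∃ d ≤ 3, ∀ i : Fin 3, (Sum.inr (i, k) ∈ I ↔ 3 ≤ (i : ℕ) + d) := by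
  by_cases h2 : Sum.inr ((2 : Fin 3), k) ∈ I
  · by_cases h1 : Sum.inr ((1 : Fin 3), k) ∈ I
    · by_cases h0 : Sum.inr ((0 : Fin 3), k) ∈ I
      · refine ⟨3, by omega, fun i => ⟨fun _ => by have := i.isLt; omega, fun _ => ?_⟩⟩
        exact colZ hI (show (0 : ℕ) ≤ (i : ℕ) by omega) h0
      · refine ⟨2, by omega, fun i => ⟨fun hm => ?_, fun hge => ?_⟩⟩
        · by_contra hlt
          have hi0 : i = (0 : Fin 3) := by
            apply Fin.val_injective; show (i : ℕ) = 0; omega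
          exact h0 (hi0 ▸ hm)
        · exact colZ hI (show (1 : ℕ) ≤ (i : ℕ) by omega) h1
    · have h0 : Sum.inr ((0 : Fin 3), k) ∉ I := fun hh => h1 (colZ hI (by decide) hh)
      refine ⟨1, by omega, fun i => ⟨fun hm => ?_, fun hge => ?_⟩⟩
      · by_contra hlt
        have hi := i.isLt
        have : (i : ℕ) = 0 ∨ (i : ℕ) = 1 := by omega
        rcases this with h | h
        · exact h0 ((Fin.val_injective (a₂ := (0 : Fin 3)) h) ▸ hm)
        · exact h1 ((Fin.val_injective (a₂ := (1 : Fin 3)) h) ▸ hm)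
      · have : i = (2 : Fin 3) := by
          apply Fin.val_injective; show (i : ℕ) = 2; have := i.isLt; omega
        exact this ▸ h2
  · have hall : ∀ i : Fin 3, Sum.inr (i, k) ∉ I := fun i hh =>
      h2 (colZ hI (show (i : ℕ) ≤ 2 by have := i.isLt; omega) hh)
    refine ⟨0, by omega, fun i => ⟨fun hm => absurd hm (hall i), fun hge => ?_⟩⟩
    have := i.isLt; omega

lemma memW (hI : IsIdealOf (relC2 a b) I) (j : Fin b) (i : Fin 4) :
    Sum.inl (i, j) ∈ I ↔ 4 ≤ (i : ℕ) + cidx a b I j := by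
  obtain ⟨c, hc, hiff⟩ := existsW hI j
  rw [ncard_inter_w I j c hc hiff]
  exact hiff i

lemma memZ (hI : IsIdealOf (relC2 a b) I) (k : Fin a) (i : Fin 3) :
    Sum.inr (i, k) ∈ I ↔ 3 ≤ (i : ℕ) + didx a b I k := by
  obtain ⟨d, hd, hiff⟩ := existsZ hI k
  rw [ncard_inter_z I k d hd hiff]
  exact hiff i

lemma cidx_le (hI : IsIdealOf (relC2 a b) I) (j : Fin b) : cidx a b I j ≤ 4 := by
  obtain ⟨c, hc, hiff⟩ := existsW hI j
  rw [ncard_inter_w I j c hc hiff]; exact hc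

lemma didx_le (hI : IsIdealOf (relC2 a b) I) (k : Fin a) : didx a b I k ≤ 3 := by
  obtain ⟨d, hd, hiff⟩ := existsZ hI k
  rw [ncard_inter_z I k d hd hiff]; exact hd

end CountC2


section MainC2

variable {a b : ℕ} {I : Set (VC2 a b)} {T : TabT a b}

lemma cnum_le (p : ℕ × ℕ) : cnum p ≤ 4 := by
  rw [cnum]; split_ifs <;> omega

lemma fA (hI : IsIdealOf (relC2 a b) I) {j j' : Fin b} (h : (j : ℕ) ≤ (j' : ℕ))
    (hc : 1 ≤ cidx a b I j') : 1 ≤ cidx a b I j := by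
  have hm : Sum.inl ((3 : Fin 4), j') ∈ I :=
    (memW hI j' 3).mpr (show 4 ≤ 3 + cidx a b I j' by omega)
  have h2 : 4 ≤ 3 + cidx a b I j := (memW hI j 3).mp (rowW hI (Or.inr rfl) h hm)
  omega

lemma fB (hI : IsIdealOf (relC2 a b) I) {j j' : Fin b} (h : (j : ℕ) ≤ (j' : ℕ))
    (hc : 4 ≤ cidx a b I j') : 4 ≤ cidx a b I j := by
  have hm : Sum.inl ((0 : Fin 4), j') ∈ I :=
    (memW hI j' 0).mpr (show 4 ≤ 0 + cidx a b I j' by omega)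
  have h2 : 4 ≤ 0 + cidx a b I j := (memW hI j 0).mp (rowW hI (Or.inl rfl) h hm)
  omega

lemma fC (hI : IsIdealOf (relC2 a b) I) {j j' : Fin b} (h : (j : ℕ) < (j' : ℕ))
    (hc : 2 ≤ cidx a b I j') : 3 ≤ cidx a b I j := by
  have hm : Sum.inl ((2 : Fin 4), j') ∈ I :=
    (memW hI j' 2).mpr (show 4 ≤ 2 + cidx a b I j' by omega)
  have h2 : 4 ≤ 1 + cidx a b I j := (memW hI j 1).mp (rowMid hI h hm)
  omega

lemma fD (hI : IsIdealOf (relC2 a b) I) {k k' : Fin a} (h : (k : ℕ) ≤ (k' : ℕ)) :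
    didx a b I k' ≤ didx a b I k := by
  have hd' := didx_le hI k'
  rcases Nat.eq_zero_or_pos (didx a b I k') with h0 | h0
  · omega
  · have hm : Sum.inr ((⟨3 - didx a b I k', by omega⟩ : Fin 3), k') ∈ I :=
      (memZ hI k' _).mpr (show 3 ≤ (3 - didx a b I k') + didx a b I k' by omega)
    have h2 : 3 ≤ (3 - didx a b I k') + didx a b I k :=
      (memZ hI k _).mp (rowZ hI h hm)
    omega

lemma fE (hI : IsIdealOf (relC2 a b) I) (j : Fin b) {k : Fin a}
    (hc : 2 ≤ didx a b I k) : 1 ≤ cidx a b I j := by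
  have hm : Sum.inr ((1 : Fin 3), k) ∈ I :=
    (memZ hI k 1).mpr (show 3 ≤ 1 + didx a b I k by omega)
  have h2 : 4 ≤ 3 + cidx a b I j := (memW hI j 3).mp (crossE hI j hm)
  omega

lemma fF (hI : IsIdealOf (relC2 a b) I) (j : Fin b) {k : Fin a}
    (hc : 3 ≤ didx a b I k) : 3 ≤ cidx a b I j := by
  have hm : Sum.inr ((0 : Fin 3), k) ∈ I :=
    (memZ hI k 0).mpr (show 3 ≤ 0 + didx a b I k by omega)
  have h2 : 4 ≤ 1 + cidx a b I j := (memW hI j 1).mp (crossF hI j hm)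
  omega

lemma tab_mem_SC2 (hI : IsIdealOf (relC2 a b) I) : tabC2 a b I ∈ SC2 a b := by
  refine ⟨?_, ?_, ?_, ?_, ?_, ?_, ?_⟩
  · intro j
    have hc := cidx_le hI j
    rw [tabC2_fst]
    have hv : cidx a b I j = 0 ∨ cidx a b I j = 1 ∨ cidx a b I j = 2 ∨
        cidx a b I j = 3 ∨ cidx a b I j = 4 := by omega
    rcases hv with h | h | h | h | h <;> rw [h] <;> decide
  · intro k
    have hd := didx_le hI k
    rw [tabC2_snd]
    have hv : didx a b I k = 0 ∨ didx a b I k = 1 ∨ didx a b I k = 2 ∨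
        didx a b I k = 3 := by omega
    rcases hv with h | h | h | h <;> rw [h] <;> decide
  · intro j j' hjj'
    have hle : (j : ℕ) ≤ (j' : ℕ) := Fin.le_def.mp hjj'
    rw [tabC2_fst a b I j, tabC2_fst a b I j']
    have hc := cidx_le hI j
    have hc' := cidx_le hI j'
    rcases Nat.eq_or_lt_of_le hle with heq | hlt
    · rw [Fin.val_injective heq]
      exact ⟨le_refl _, le_refl _⟩
    · have f1 := fA hI hle
      have f2 := fC hI hlt
      have f3 := fB hI hle
      have hv : cidx a b I j = 0 ∨ cidx a b I j = 1 ∨ cidx a b I j = 2 ∨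
          cidx a b I j = 3 ∨ cidx a b I j = 4 := by omega
      have hv' : cidx a b I j' = 0 ∨ cidx a b I j' = 1 ∨ cidx a b I j' = 2 ∨
          cidx a b I j' = 3 ∨ cidx a b I j' = 4 := by omega
      rcases hv with h | h | h | h | h <;> rcases hv' with h' | h' | h' | h' | h' <;>
        rw [h, h'] <;> first | decide | omega
  · intro k k' hkk'
    have hle : (k : ℕ) ≤ (k' : ℕ) := Fin.le_def.mp hkk'
    rw [tabC2_snd a b I k, tabC2_snd a b I k']
    have hd := didx_le hI k
    have hd' := didx_le hI k'
    have f := fD hI hle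
    have hv : didx a b I k = 0 ∨ didx a b I k = 1 ∨ didx a b I k = 2 ∨
        didx a b I k = 3 := by omega
    have hv' : didx a b I k' = 0 ∨ didx a b I k' = 1 ∨ didx a b I k' = 2 ∨
        didx a b I k' = 3 := by omega
    rcases hv with h | h | h | h <;> rcases hv' with h' | h' | h' | h' <;>
      rw [h, h'] <;> first | decide | omega
  · intro j k
    rw [tabC2_fst, tabC2_snd]
    have hc := cidx_le hI j
    have hd := didx_le hI k
    have f4 := fE hI j (k := k)
    have f5 := fF hI j (k := k)
    have hv : cidx a b I j = 0 ∨ cidx a b I j = 1 ∨ cidx a b I j = 2 ∨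
        cidx a b I j = 3 ∨ cidx a b I j = 4 := by omega
    have hv' : didx a b I k = 0 ∨ didx a b I k = 1 ∨ didx a b I k = 2 ∨
        didx a b I k = 3 := by omega
    rcases hv with h | h | h | h | h <;> rcases hv' with h' | h' | h' | h' <;>
      rw [h, h'] <;> first | decide | omega
  · intro j
    have hc := cidx_le hI j
    rw [tabC2_fst]
    have hv : cidx a b I j = 0 ∨ cidx a b I j = 1 ∨ cidx a b I j = 2 ∨
        cidx a b I j = 3 ∨ cidx a b I j = 4 := by omega
    rcases hv with h | h | h | h | h <;> rw [h] <;> decide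
  · intro j j' e e'
    rw [tabC2_fst] at e e'
    have hcj : cidx a b I j = 2 := by
      have hc := cidx_le hI j
      have hv : cidx a b I j = 0 ∨ cidx a b I j = 1 ∨ cidx a b I j = 2 ∨
          cidx a b I j = 3 ∨ cidx a b I j = 4 := by omega
      rcases hv with h | h | h | h | h <;> rw [h] at e <;>
        first | exact h | exact absurd e (by decide)
    have hcj' : cidx a b I j' = 2 := by
      have hc := cidx_le hI j'
      have hv : cidx a b I j' = 0 ∨ cidx a b I j' = 1 ∨ cidx a b I j' = 2 ∨
          cidx a b I j' = 3 ∨ cidx a b I j' = 4 := by omega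
      rcases hv with h | h | h | h | h <;> rw [h] at e' <;>
        first | exact h | exact absurd e' (by decide)
    rcases Nat.lt_trichotomy (j : ℕ) (j' : ℕ) with hlt | heq | hlt
    · exact absurd (fC hI hlt (by omega)) (by omega)
    · exact Fin.val_injective heq
    · exact absurd (fC hI hlt (by omega)) (by omega)

/-- The inverse map: the order ideal associated to a tableau. -/
def invC2 (a b : ℕ) (T : TabT a b) : Set (VC2 a b) :=
  {x | match x with
      | Sum.inl (i, j) => 4 ≤ (i : ℕ) + cnum (T.1 j)
      | Sum.inr (i, k) => 3 ≤ (i : ℕ) + (4 - T.2 k)}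

lemma mem_invC2_inl (i : Fin 4) (j : Fin b) :
    Sum.inl (i, j) ∈ invC2 a b T ↔ 4 ≤ (i : ℕ) + cnum (T.1 j) := Iff.rfl

lemma mem_invC2_inr (i : Fin 3) (k : Fin a) :
    Sum.inr (i, k) ∈ invC2 a b T ↔ 3 ≤ (i : ℕ) + (4 - T.2 k) := Iff.rfl

lemma colCases (hT : T ∈ SC2 a b) (j : Fin b) :
    T.1 j = (1, 2) ∨ T.1 j = (1, 3) ∨ T.1 j = (2, 3) ∨ T.1 j = (2, 4) ∨
      T.1 j = (3, 4) := by
  obtain ⟨hcol, -, -, -, -, h14, -⟩ := hT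
  obtain ⟨hc1, hc2, hc3, hc4, hc5⟩ := hcol j
  have hn := h14 j
  rcases hp : T.1 j with ⟨x, y⟩
  rw [hp] at hc1 hc2 hc3 hc4 hc5 hn
  have hc1' : 1 ≤ x := hc1
  have hc2' : x ≤ 4 := hc2
  have hc3' : 1 ≤ y := hc3
  have hc4' : y ≤ 4 := hc4
  have hc5' : x < y := hc5
  simp only [Ne, Prod.mk.injEq, not_and] at hn
  simp only [Prod.mk.injEq]
  omega

lemma cnum_facts (hT : T ∈ SC2 a b) {j j' : Fin b} (hlt : (j : ℕ) < (j' : ℕ)) :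
    (1 ≤ cnum (T.1 j') → 1 ≤ cnum (T.1 j)) ∧
    (2 ≤ cnum (T.1 j') → 3 ≤ cnum (T.1 j)) ∧
    (4 ≤ cnum (T.1 j') → 4 ≤ cnum (T.1 j)) := by
  have hTc := hT
  obtain ⟨-, -, hrow, -, -, -, h23⟩ := hT
  have hrowjj := hrow j j' (Fin.le_def.mpr (le_of_lt hlt))
  rcases colCases hTc j with hp | hp | hp | hp | hp <;>
    rcases colCases hTc j' with hq | hq | hq | hq | hq <;>
    rw [hp, hq] at hrowjj <;> rw [hp, hq] <;>
    first
      | decide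
      | exact absurd hrowjj (by decide)
      | exact absurd (congrArg Fin.val (h23 j j' hp hq)) (by omega)

lemma invC2_ideal (hT : T ∈ SC2 a b) : IsIdealOf (relC2 a b) (invC2 a b T) := by
  have hTc := hT
  obtain ⟨hcolT, hent, hrow, hzrow, hwz, h14, h23⟩ := hT
  apply isIdealOf_of_step
  rintro (⟨i, j⟩ | ⟨i, k⟩) (⟨i', j'⟩ | ⟨i', k'⟩) hr hy
  · rcases hr with ⟨hjj, hii⟩ | ⟨hjj, hcase⟩
    · have he : j = j' := Fin.val_injective hjj
      subst he
      rw [mem_invC2_inl] at hy ⊢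
      omega
    · have hlt : (j : ℕ) < (j' : ℕ) := by omega
      obtain ⟨f1, f2, f3⟩ := cnum_facts hTc hlt
      rw [mem_invC2_inl] at hy ⊢
      rcases hcase with ⟨e1, e2⟩ | ⟨e1, e2⟩ | ⟨e1, e2⟩ <;> omega
  · obtain ⟨hb1, hk0, hcase⟩ := hr
    rw [mem_invC2_inr] at hy
    rw [mem_invC2_inl]
    have hwzj := hwz j k'
    have he := hent k'
    rcases colCases hTc j with hp | hp | hp | hp | hp <;>
      rw [hp] at hwzj ⊢ <;>
      norm_num [cnum] <;>
      rcases hcase with ⟨e1, e2⟩ | ⟨e1, e2⟩ <;>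
      omega
  · exact hr.elim
  · rcases hr with ⟨hkk, hii⟩ | ⟨hkk, hii⟩
    · have he : k = k' := Fin.val_injective hkk
      subst he
      rw [mem_invC2_inr] at hy ⊢
      omega
    · have hzkk := hzrow k k' (Fin.le_def.mpr (by omega))
      have he := hent k'
      have he2 := hent k
      rw [mem_invC2_inr] at hy ⊢
      omega

lemma tab_invC2 (hT : T ∈ SC2 a b) : tabC2 a b (invC2 a b T) = T := by
  have hcw : ∀ j : Fin b, cidx a b (invC2 a b T) j = cnum (T.1 j) := fun j =>
    ncard_inter_w _ j _ (cnum_le _) (fun i => Iff.rfl)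
  have hent := hT.2.1
  have hdz : ∀ k : Fin a, didx a b (invC2 a b T) k = 4 - T.2 k := fun k =>
    ncard_inter_z _ k _ (by obtain ⟨h1, h2⟩ := hent k; omega) (fun i => Iff.rfl)
  refine Prod.ext (funext fun j => ?_) (funext fun k => ?_)
  · rw [tabC2_fst, hcw j]
    rcases colCases hT j with hp | hp | hp | hp | hp <;> rw [hp] <;> decide
  · rw [tabC2_snd, hdz k]
    have he := hent k
    have hv : T.2 k = 1 ∨ T.2 k = 2 ∨ T.2 k = 3 ∨ T.2 k = 4 := by omega
    rcases hv with h | h | h | h <;> rw [h] <;> decide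

lemma invC2_tab (hI : IsIdealOf (relC2 a b) I) : invC2 a b (tabC2 a b I) = I := by
  ext x
  rcases x with ⟨i, j⟩ | ⟨i, k⟩
  · rw [mem_invC2_inl, tabC2_fst]
    have hc := cidx_le hI j
    have hcc : cnum (colmap (cidx a b I j)) = cidx a b I j := by
      have hv : cidx a b I j = 0 ∨ cidx a b I j = 1 ∨ cidx a b I j = 2 ∨
          cidx a b I j = 3 ∨ cidx a b I j = 4 := by omega
      rcases hv with h | h | h | h | h <;> rw [h] <;> decide
    rw [hcc]
    exact (memW hI j i).symm
  · rw [mem_invC2_inr, tabC2_snd]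
    have hd := didx_le hI k
    have hdd : 4 - emap (didx a b I k) = didx a b I k := by
      have hv : didx a b I k = 0 ∨ didx a b I k = 1 ∨ didx a b I k = 2 ∨
          didx a b I k = 3 := by omega
      rcases hv with h | h | h | h <;> rw [h] <;> decide
    rw [hdd]
    exact (memZ hI k i).symm

end MainC2

/-- The map `I ↦ tableau(I)` is a bijection from the set of order ideals of the
`C2`-semistandard poset `P_C2^{βα}(a,b)` onto the set `S_C2(a,b)` of
`C2`-semistandard tableaux of shape `(a,b)`. -/
theorem C2_ideals_biject_with_tableaux (a b : ℕ) :
    Set.BijOn (tabC2 a b) {I : Set (VC2 a b) | IsIdealOf (relC2 a b) I} (SC2 a b) := by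
  exact Set.InvOn.bijOn (f' := invC2 a b)
    ⟨fun I hI => invC2_tab hI, fun T hT => tab_invC2 hT⟩
    (fun I hI => tab_mem_SC2 hI) (fun T hT => invC2_ideal hT)
end

section
/- Fix integers a, b ≥ 0. Define a map φ on columns by: (1) ↦ the block of two length-one columns (1)(1), (2) ↦ (2)(2), (3) ↦ (3)(3), (4) ↦ (4)(4); (1,2) ↦ the block of two length-two columns (1,2)(1,2); (1,3) ↦ (1,3)(1,3); (2,3) ↦ (1,3)(2,4); (2,4) ↦ (2,4)(2,4); (3,4) ↦ (3,4)(3,4); and extend φ to tableaux by applying it column by column (so a tableau with a+b columns is sent to a tableau with 2a+2b columns). Then φ is a bijection from S_C2(a,b) onto LT_C2(a,b), and it is weight-preserving: for every T ∈ S_C2(a,b), writing U = φ(T), one has n_1(U) − n_2(U) + n_3(U) − n_4(U) = 2 (n_1(T) − n_2(T) + n_3(T) − n_4(T)) and n_2(U) − n_3(U) = 2 (n_2(T) − n_3(T)). -/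
/-- A filling of the doubled shape: `2b` columns of length two followed by `2a`
columns of length one. -/
abbrev LTabT (a b : ℕ) : Type := (Fin (2 * b) → ℕ × ℕ) × (Fin (2 * a) → ℕ)

/-- The admissible pairs of adjacent length-two columns within a `2`-column block of a
Littelmann `C2`-tableau: `(1,2)(1,2)`, `(1,3)(1,3)`, `(1,3)(2,4)`, `(2,4)(2,4)`,
`(3,4)(3,4)`. -/
def admBlockC2 (c c' : ℕ × ℕ) : Prop :=
  (c = (1, 2) ∧ c' = (1, 2)) ∨ (c = (1, 3) ∧ c' = (1, 3)) ∨ (c = (1, 3) ∧ c' = (2, 4)) ∨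
    (c = (2, 4) ∧ c' = (2, 4)) ∨ (c = (3, 4) ∧ c' = (3, 4))

/-- The set `LT_C2(a,b)` of (transposed, column-grouped) Littelmann tableaux for `C2`:
semistandard fillings of the doubled shape with entries from `{1,2,3,4}` such that each
consecutive block of two columns is admissible. -/
def LTC2 (a b : ℕ) : Set (LTabT a b) :=
  {U | (∀ j : Fin (2 * b), 1 ≤ (U.1 j).1 ∧ (U.1 j).1 ≤ 4 ∧ 1 ≤ (U.1 j).2 ∧
          (U.1 j).2 ≤ 4 ∧ (U.1 j).1 < (U.1 j).2) ∧
       (∀ i : Fin (2 * a), 1 ≤ U.2 i ∧ U.2 i ≤ 4) ∧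
       (∀ j j' : Fin (2 * b), j ≤ j' → (U.1 j).1 ≤ (U.1 j').1 ∧ (U.1 j).2 ≤ (U.1 j').2) ∧
       (∀ i i' : Fin (2 * a), i ≤ i' → U.2 i ≤ U.2 i') ∧
       (∀ (j : Fin (2 * b)) (i : Fin (2 * a)), (U.1 j).1 ≤ U.2 i) ∧
       (∀ i : Fin b,
          admBlockC2 (U.1 ⟨2 * (i : ℕ), by have := i.isLt; omega⟩)
            (U.1 ⟨2 * (i : ℕ) + 1, by have := i.isLt; omega⟩)) ∧
       (∀ i : Fin a,
          U.2 ⟨2 * (i : ℕ), by have := i.isLt; omega⟩ =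
            U.2 ⟨2 * (i : ℕ) + 1, by have := i.isLt; omega⟩)}

/-- The column-by-column doubling map `φ` from `C2`-semistandard tableaux to Littelmann
`C2`-tableaux: each length-one column `(c)` is sent to the block `(c)(c)`; each
length-two column other than `(2,3)` is duplicated, and `(2,3)` is sent to the block
`(1,3)(2,4)`. -/
def phiC2 (a b : ℕ) (T : TabT a b) : LTabT a b :=
  (fun k : Fin (2 * b) =>
    if (k : ℕ) % 2 = 0 then
      (if T.1 ⟨(k : ℕ) / 2, by have := k.isLt; omega⟩ = (2, 3) then (1, 3)
       else T.1 ⟨(k : ℕ) / 2, by have := k.isLt; omega⟩)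
    else
      (if T.1 ⟨(k : ℕ) / 2, by have := k.isLt; omega⟩ = (2, 3) then (2, 4)
       else T.1 ⟨(k : ℕ) / 2, by have := k.isLt; omega⟩),
   fun k : Fin (2 * a) => T.2 ⟨(k : ℕ) / 2, by have := k.isLt; omega⟩)


set_option maxHeartbeats 1000000

private lemma sum_range_two_mul (g : ℕ → ℤ) : ∀ m : ℕ,
    ∑ k ∈ Finset.range (2 * m), g k = ∑ i ∈ Finset.range m, (g (2 * i) + g (2 * i + 1))
  | 0 => by simp
  | (m + 1) => by
      have h2 : 2 * (m + 1) = (2 * m + 1) + 1 := by ring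
      rw [h2, Finset.sum_range_succ, Finset.sum_range_succ, Finset.sum_range_succ,
        sum_range_two_mul g m]
      ring

private lemma fin_sum_pair {m : ℕ} (f : Fin (2 * m) → ℤ) :
    ∑ k, f k = ∑ i : Fin m,
      (f ⟨2 * i.1, by have := i.isLt; omega⟩ + f ⟨2 * i.1 + 1, by have := i.isLt; omega⟩) := by
  classical
  set g : ℕ → ℤ := fun k => if h : k < 2 * m then f ⟨k, h⟩ else 0 with hg
  have h1 : ∑ k, f k = ∑ k ∈ Finset.range (2 * m), g k := by
    rw [← Fin.sum_univ_eq_sum_range]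
    exact Finset.sum_congr rfl fun k _ => by simp [g, k.isLt]
  have h2 : ∑ i : Fin m, (f ⟨2 * i.1, by have := i.isLt; omega⟩
        + f ⟨2 * i.1 + 1, by have := i.isLt; omega⟩)
      = ∑ i ∈ Finset.range m, (g (2 * i) + g (2 * i + 1)) := by
    rw [← Fin.sum_univ_eq_sum_range (fun k => g (2 * k) + g (2 * k + 1))]
    refine Finset.sum_congr rfl fun i _ => ?_
    have hi := i.isLt
    have e1 : 2 * i.1 < 2 * m := by omega
    have e2 : 2 * i.1 + 1 < 2 * m := by omega
    simp [g, e1, e2]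
  rw [h1, h2, sum_range_two_mul]

private lemma indicator_sum {n : ℕ} (f : Fin n → ℕ) (k : ℕ) :
    ((Finset.univ.filter fun i : Fin n => f i = k).card : ℤ)
      = ∑ i, (if f i = k then (1 : ℤ) else 0) := by
  rw [Finset.card_filter]
  push_cast
  rfl

private def Sw1 : ℕ → ℤ := fun x =>
  (if x = 1 then 1 else 0) - (if x = 2 then 1 else 0) + (if x = 3 then 1 else 0)
    - (if x = 4 then 1 else 0)

private def Sw2 : ℕ → ℤ := fun x => (if x = 2 then 1 else 0) - (if x = 3 then 1 else 0)

private lemma nk_expand1 {m n : ℕ} (V : (Fin m → ℕ × ℕ) × (Fin n → ℕ)) :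
    (nkOf V 1 : ℤ) - (nkOf V 2 : ℤ) + (nkOf V 3 : ℤ) - (nkOf V 4 : ℤ)
      = (∑ j, (Sw1 (V.1 j).1 + Sw1 (V.1 j).2)) + ∑ i, Sw1 (V.2 i) := by
  simp only [nkOf]
  push_cast
  simp only [indicator_sum, Sw1, Finset.sum_add_distrib, Finset.sum_sub_distrib]
  ring

private lemma nk_expand2 {m n : ℕ} (V : (Fin m → ℕ × ℕ) × (Fin n → ℕ)) :
    (nkOf V 2 : ℤ) - (nkOf V 3 : ℤ)
      = (∑ j, (Sw2 (V.1 j).1 + Sw2 (V.1 j).2)) + ∑ i, Sw2 (V.2 i) := by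
  simp only [nkOf]
  push_cast
  simp only [indicator_sum, Sw2, Finset.sum_add_distrib, Finset.sum_sub_distrib]
  ring

private lemma wt_phi (a b : ℕ) (T : TabT a b) (S : ℕ → ℤ)
    (hS : S 1 + S 2 + S 3 + S 4 = 2 * (S 2 + S 3)) :
    (∑ j : Fin (2 * b), (S ((phiC2 a b T).1 j).1 + S ((phiC2 a b T).1 j).2))
      + ∑ i : Fin (2 * a), S ((phiC2 a b T).2 i)
    = 2 * ((∑ j : Fin b, (S (T.1 j).1 + S (T.1 j).2)) + ∑ i : Fin a, S (T.2 i)) := by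
  rw [fin_sum_pair, fin_sum_pair]
  have hcol : ∀ j : Fin b,
      (S ((phiC2 a b T).1 ⟨2 * j.1, by have := j.isLt; omega⟩).1
        + S ((phiC2 a b T).1 ⟨2 * j.1, by have := j.isLt; omega⟩).2)
      + (S ((phiC2 a b T).1 ⟨2 * j.1 + 1, by have := j.isLt; omega⟩).1
        + S ((phiC2 a b T).1 ⟨2 * j.1 + 1, by have := j.isLt; omega⟩).2)
      = 2 * (S (T.1 j).1 + S (T.1 j).2) := by
    intro j
    have e0 : (2 * j.1) % 2 = 0 := by omega
    have e1 : (2 * j.1 + 1) % 2 = 1 := by omega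
    have d0 : (2 * j.1) / 2 = j.1 := by omega
    have d1 : (2 * j.1 + 1) / 2 = j.1 := by omega
    simp only [phiC2, e0, e1, d0, d1, Fin.eta]
    by_cases h : T.1 j = (2, 3)
    · simp [h]; linarith
    · simp [h]; ring
  have hrow : ∀ i : Fin a,
      S ((phiC2 a b T).2 ⟨2 * i.1, by have := i.isLt; omega⟩)
        + S ((phiC2 a b T).2 ⟨2 * i.1 + 1, by have := i.isLt; omega⟩)
      = 2 * S (T.2 i) := by
    intro i
    have d0 : (2 * i.1) / 2 = i.1 := by omega
    have d1 : (2 * i.1 + 1) / 2 = i.1 := by omega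
    simp only [phiC2, d0, d1, Fin.eta]
    ring
  rw [Finset.sum_congr rfl fun j _ => hcol j, Finset.sum_congr rfl fun i _ => hrow i]
  rw [← Finset.mul_sum, ← Finset.mul_sum]
  ring


lemma pairEq (c : ℕ × ℕ) (u v : ℕ) : c = (u, v) ↔ c.1 = u ∧ c.2 = v := by
  rw [Prod.ext_iff]

lemma phi_col_cases (a b : ℕ) (T : TabT a b) (k : Fin (2 * b)) (j : Fin b)
    (hj : (j : ℕ) = (k : ℕ) / 2) :
    (T.1 j = (2, 3) ∧ (k : ℕ) % 2 = 0 ∧ (phiC2 a b T).1 k = (1, 3)) ∨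
    (T.1 j = (2, 3) ∧ (k : ℕ) % 2 = 1 ∧ (phiC2 a b T).1 k = (2, 4)) ∨
    (T.1 j ≠ (2, 3) ∧ (phiC2 a b T).1 k = T.1 j) := by
  have hJ : (⟨(k : ℕ) / 2, by have := k.isLt; omega⟩ : Fin b) = j := Fin.ext hj.symm
  simp only [phiC2, hJ]
  by_cases h : T.1 j = (2, 3) <;> by_cases hp : (k : ℕ) % 2 = 0 <;> simp [h, hp] <;> omega

lemma phi_row (a b : ℕ) (T : TabT a b) (i : Fin (2 * a)) (j : Fin a)
    (hj : (j : ℕ) = (i : ℕ) / 2) : (phiC2 a b T).2 i = T.2 j := by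
  have hJ : (⟨(i : ℕ) / 2, by have := i.isLt; omega⟩ : Fin a) = j := Fin.ext hj.symm
  simp only [phiC2, hJ]

lemma phi_mapsTo (a b : ℕ) : Set.MapsTo (phiC2 a b) (SC2 a b) (LTC2 a b) := by
  intro T hT
  obtain ⟨h1, h2, h3, h4, h5, h6, h7⟩ := hT
  refine ⟨?_, ?_, ?_, ?_, ?_, ?_, ?_⟩
  · -- column bounds
    intro k
    obtain ⟨j, hj⟩ : ∃ j : Fin b, (j : ℕ) = (k : ℕ) / 2 :=
      ⟨⟨(k : ℕ) / 2, by have := k.isLt; omega⟩, rfl⟩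
    obtain ⟨hx1, hx4, hy1, hy4, hxy⟩ := h1 j
    rcases phi_col_cases a b T k j hj with ⟨e1, e2, e3⟩ | ⟨e1, e2, e3⟩ | ⟨e1, e3⟩ <;>
      rw [e3] <;> [skip; skip; exact ⟨hx1, hx4, hy1, hy4, hxy⟩] <;> simp
  · -- row bounds
    intro i
    obtain ⟨j, hj⟩ : ∃ j : Fin a, (j : ℕ) = (i : ℕ) / 2 :=
      ⟨⟨(i : ℕ) / 2, by have := i.isLt; omega⟩, rfl⟩
    rw [phi_row a b T i j hj]
    exact h2 j
  · -- column monotonicity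
    intro k k' hkk'
    have hkk : (k : ℕ) ≤ (k' : ℕ) := hkk'
    obtain ⟨j, hj⟩ : ∃ j : Fin b, (j : ℕ) = (k : ℕ) / 2 :=
      ⟨⟨(k : ℕ) / 2, by have := k.isLt; omega⟩, rfl⟩
    obtain ⟨j', hj'⟩ : ∃ j : Fin b, (j : ℕ) = (k' : ℕ) / 2 :=
      ⟨⟨(k' : ℕ) / 2, by have := k'.isLt; omega⟩, rfl⟩
    obtain ⟨hx1, hx4, hy1, hy4, hxy⟩ := h1 j
    obtain ⟨hx1', hx4', hy1', hy4', hxy'⟩ := h1 j'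
    obtain ⟨hmx, hmy⟩ := h3 j j' (by rw [Fin.le_def]; omega)
    have H6 : ¬((T.1 j).1 = 1 ∧ (T.1 j).2 = 4) := fun h => h6 j ((pairEq _ _ _).2 h)
    have H6' : ¬((T.1 j').1 = 1 ∧ (T.1 j').2 = 4) := fun h => h6 j' ((pairEq _ _ _).2 h)
    rcases phi_col_cases a b T k j hj with ⟨e1, e2, e3⟩ | ⟨e1, e2, e3⟩ | ⟨e1, e3⟩ <;>
        rcases phi_col_cases a b T k' j' hj' with ⟨f1, f2, f3⟩ | ⟨f1, f2, f3⟩ | ⟨f1, f3⟩ <;>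
        rw [e3, f3] <;>
        [skip; skip; skip; skip; skip; skip; skip; skip; exact ⟨hmx, hmy⟩]
    -- cases with at least one (2,3) column
    · exact ⟨le_refl _, le_refl _⟩
    · exact ⟨by simp, by simp⟩
    · -- (2,3) then non-(2,3): goal (1,3) ≤ T.1 j'
      rw [pairEq] at e1
      exact ⟨by simp; omega, by simp; omega⟩
    · -- k odd, k' even, both (2,3): impossible
      have := congrArg Fin.val (h7 j j' e1 f1)
      omega
    · exact ⟨le_refl _, le_refl _⟩
    · -- (2,4) ≤ non-(2,3) column
      rw [pairEq] at e1
      have f1' : ¬((T.1 j').1 = 2 ∧ (T.1 j').2 = 3) := fun h => f1 ((pairEq _ _ _).2 h)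
      exact ⟨by simp; omega, by simp; omega⟩
    · -- non-(2,3) column ≤ (1,3)
      rw [pairEq] at f1
      have e1' : ¬((T.1 j).1 = 2 ∧ (T.1 j).2 = 3) := fun h => e1 ((pairEq _ _ _).2 h)
      exact ⟨by simp; omega, by simp; omega⟩
    · -- non-(2,3) column ≤ (2,4)
      rw [pairEq] at f1
      exact ⟨by simp; omega, by simp; omega⟩
  · -- row monotonicity
    intro i i' hii'
    have hii : (i : ℕ) ≤ (i' : ℕ) := hii'
    obtain ⟨j, hj⟩ : ∃ j : Fin a, (j : ℕ) = (i : ℕ) / 2 :=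
      ⟨⟨(i : ℕ) / 2, by have := i.isLt; omega⟩, rfl⟩
    obtain ⟨j', hj'⟩ : ∃ j : Fin a, (j : ℕ) = (i' : ℕ) / 2 :=
      ⟨⟨(i' : ℕ) / 2, by have := i'.isLt; omega⟩, rfl⟩
    rw [phi_row a b T i j hj, phi_row a b T i' j' hj']
    exact h4 j j' (by rw [Fin.le_def]; omega)
  · -- column top ≤ row entries
    intro k i
    obtain ⟨j, hj⟩ : ∃ j : Fin b, (j : ℕ) = (k : ℕ) / 2 :=
      ⟨⟨(k : ℕ) / 2, by have := k.isLt; omega⟩, rfl⟩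
    obtain ⟨j', hj'⟩ : ∃ j : Fin a, (j : ℕ) = (i : ℕ) / 2 :=
      ⟨⟨(i : ℕ) / 2, by have := i.isLt; omega⟩, rfl⟩
    rw [phi_row a b T i j' hj']
    have H5 := h5 j j'
    rcases phi_col_cases a b T k j hj with ⟨e1, e2, e3⟩ | ⟨e1, e2, e3⟩ | ⟨e1, e3⟩ <;>
      rw [e3]
    · rw [pairEq] at e1; simp; omega
    · rw [pairEq] at e1; simp; omega
    · exact H5
  · -- admissible blocks
    intro i
    obtain ⟨hx1, hx4, hy1, hy4, hxy⟩ := h1 i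
    have H6 : ¬((T.1 i).1 = 1 ∧ (T.1 i).2 = 4) := fun h => h6 i ((pairEq _ _ _).2 h)
    have c0 := phi_col_cases a b T ⟨2 * (i : ℕ), by have := i.isLt; omega⟩ i (by simp only [Fin.val_mk]; omega)
    have c1 := phi_col_cases a b T ⟨2 * (i : ℕ) + 1, by have := i.isLt; omega⟩ i (by simp only [Fin.val_mk]; omega)
    simp only [Fin.val_mk] at c0 c1
    rcases c0 with ⟨e1, e2, e3⟩ | ⟨e1, e2, e3⟩ | ⟨e1, e3⟩ <;>
        rcases c1 with ⟨f1, f2, f3⟩ | ⟨f1, f2, f3⟩ | ⟨f1, f3⟩ <;>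
        simp only [admBlockC2] <;> rw [e3, f3] <;> try omega
    · -- block ((1,3),(2,4))
      tauto
    · exact absurd e1 f1
    · exact absurd f1 e1
    · -- duplicated non-(2,3) column
      have e1' : ¬((T.1 i).1 = 2 ∧ (T.1 i).2 = 3) := fun h => e1 ((pairEq _ _ _).2 h)
      simp only [pairEq]
      omega
  · -- doubled rows
    intro i
    rw [phi_row a b T ⟨2 * (i : ℕ), by have := i.isLt; omega⟩ i (by simp only [Fin.val_mk]; omega),
      phi_row a b T ⟨2 * (i : ℕ) + 1, by have := i.isLt; omega⟩ i (by simp only [Fin.val_mk]; omega)]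

lemma phi_recover_col (a b : ℕ) (T : TabT a b) (j : Fin b) :
    T.1 j = if (phiC2 a b T).1 ⟨2 * (j : ℕ), by have := j.isLt; omega⟩ =
        (phiC2 a b T).1 ⟨2 * (j : ℕ) + 1, by have := j.isLt; omega⟩ then
      (phiC2 a b T).1 ⟨2 * (j : ℕ), by have := j.isLt; omega⟩ else (2, 3) := by
  have c0 := phi_col_cases a b T ⟨2 * (j : ℕ), by have := j.isLt; omega⟩ j
    (by simp only [Fin.val_mk]; omega)
  have c1 := phi_col_cases a b T ⟨2 * (j : ℕ) + 1, by have := j.isLt; omega⟩ j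
    (by simp only [Fin.val_mk]; omega)
  simp only [Fin.val_mk] at c0 c1
  rcases c0 with ⟨e1, e2, e3⟩ | ⟨e1, e2, e3⟩ | ⟨e1, e3⟩ <;>
      rcases c1 with ⟨f1, f2, f3⟩ | ⟨f1, f2, f3⟩ | ⟨f1, f3⟩ <;>
      first
        | omega
        | exact absurd e1 f1
        | exact absurd f1 e1
        | (rw [e3, f3]; simp [Prod.ext_iff] <;> exact (pairEq _ _ _).1 e1)

lemma phi_recover_row (a b : ℕ) (T : TabT a b) (i : Fin a) :
    T.2 i = (phiC2 a b T).2 ⟨2 * (i : ℕ), by have := i.isLt; omega⟩ :=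
  (phi_row a b T _ i (by simp only [Fin.val_mk]; omega)).symm

lemma phi_inj (a b : ℕ) : Function.Injective (phiC2 a b) := by
  intro T T' h
  refine Prod.ext_iff.mpr ⟨funext fun j => ?_, funext fun i => ?_⟩
  · rw [phi_recover_col a b T j, phi_recover_col a b T' j, h]
  · rw [phi_recover_row a b T i, phi_recover_row a b T' i, h]

def psiC2 (a b : ℕ) (U : LTabT a b) : TabT a b :=
  (fun j : Fin b =>
    if U.1 ⟨2 * (j : ℕ), by have := j.isLt; omega⟩ = (1, 3) ∧
        U.1 ⟨2 * (j : ℕ) + 1, by have := j.isLt; omega⟩ = (2, 4) then (2, 3)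
    else U.1 ⟨2 * (j : ℕ), by have := j.isLt; omega⟩,
   fun i : Fin a => U.2 ⟨2 * (i : ℕ), by have := i.isLt; omega⟩)

lemma psi_col_cases (a b : ℕ) (U : LTabT a b) (j : Fin b)
    (hadm : admBlockC2 (U.1 ⟨2 * (j : ℕ), by have := j.isLt; omega⟩)
      (U.1 ⟨2 * (j : ℕ) + 1, by have := j.isLt; omega⟩)) :
    (U.1 ⟨2 * (j : ℕ), by have := j.isLt; omega⟩ = (1, 2) ∧
      U.1 ⟨2 * (j : ℕ) + 1, by have := j.isLt; omega⟩ = (1, 2) ∧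
      (psiC2 a b U).1 j = (1, 2)) ∨
    (U.1 ⟨2 * (j : ℕ), by have := j.isLt; omega⟩ = (1, 3) ∧
      U.1 ⟨2 * (j : ℕ) + 1, by have := j.isLt; omega⟩ = (1, 3) ∧
      (psiC2 a b U).1 j = (1, 3)) ∨
    (U.1 ⟨2 * (j : ℕ), by have := j.isLt; omega⟩ = (1, 3) ∧
      U.1 ⟨2 * (j : ℕ) + 1, by have := j.isLt; omega⟩ = (2, 4) ∧
      (psiC2 a b U).1 j = (2, 3)) ∨
    (U.1 ⟨2 * (j : ℕ), by have := j.isLt; omega⟩ = (2, 4) ∧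
      U.1 ⟨2 * (j : ℕ) + 1, by have := j.isLt; omega⟩ = (2, 4) ∧
      (psiC2 a b U).1 j = (2, 4)) ∨
    (U.1 ⟨2 * (j : ℕ), by have := j.isLt; omega⟩ = (3, 4) ∧
      U.1 ⟨2 * (j : ℕ) + 1, by have := j.isLt; omega⟩ = (3, 4) ∧
      (psiC2 a b U).1 j = (3, 4)) := by
  rcases hadm with ⟨e1, e2⟩ | ⟨e1, e2⟩ | ⟨e1, e2⟩ | ⟨e1, e2⟩ | ⟨e1, e2⟩ <;>
    simp [psiC2, e1, e2]

lemma psi_row_eq (a b : ℕ) (U : LTabT a b) (i : Fin a) :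
    (psiC2 a b U).2 i = U.2 ⟨2 * (i : ℕ), by have := i.isLt; omega⟩ := rfl

lemma psi_mem (a b : ℕ) (U : LTabT a b) (hU : U ∈ LTC2 a b) : psiC2 a b U ∈ SC2 a b := by
  obtain ⟨g1, g2, g3, g4, g5, g6, g7⟩ := hU
  refine ⟨?_, ?_, ?_, ?_, ?_, ?_, ?_⟩
  · -- column bounds
    intro j
    rcases psi_col_cases a b U j (g6 j) with ⟨e1, e2, e3⟩ | ⟨e1, e2, e3⟩ | ⟨e1, e2, e3⟩ |
      ⟨e1, e2, e3⟩ | ⟨e1, e2, e3⟩ <;> rw [e3] <;> exact (by decide)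
  · -- row bounds
    intro i
    rw [psi_row_eq]
    exact g2 _
  · -- column monotonicity
    intro j j' hjj'
    rcases eq_or_lt_of_le hjj' with heq | hlt
    · subst heq; exact ⟨le_refl _, le_refl _⟩
    · have hlt' : (j : ℕ) < (j' : ℕ) := hlt
      have hA := g3 ⟨2 * (j : ℕ), by have := j.isLt; omega⟩
        ⟨2 * (j' : ℕ), by have := j'.isLt; omega⟩ (by rw [Fin.le_def]; simp; omega)
      have hB := g3 ⟨2 * (j : ℕ) + 1, by have := j.isLt; omega⟩
        ⟨2 * (j' : ℕ), by have := j'.isLt; omega⟩ (by rw [Fin.le_def]; simp; omega)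
      rcases psi_col_cases a b U j (g6 j) with ⟨e1, e2, e3⟩ | ⟨e1, e2, e3⟩ | ⟨e1, e2, e3⟩ |
          ⟨e1, e2, e3⟩ | ⟨e1, e2, e3⟩ <;>
        rcases psi_col_cases a b U j' (g6 j') with ⟨f1, f2, f3⟩ | ⟨f1, f2, f3⟩ | ⟨f1, f2, f3⟩ |
          ⟨f1, f2, f3⟩ | ⟨f1, f2, f3⟩ <;>
        first
          | (rw [e3, f3]; refine ⟨?_, ?_⟩ <;> decide)
          | (exfalso; rw [e2, f1] at hB; simp at hB)
  · -- row monotonicity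
    intro i i' hii'
    have h : (i : ℕ) ≤ (i' : ℕ) := hii'
    rw [psi_row_eq, psi_row_eq]
    exact g4 _ _ (by rw [Fin.le_def]; simp; omega)
  · -- column top ≤ row entries
    intro j i
    rw [psi_row_eq]
    have h5a := g5 ⟨2 * (j : ℕ), by have := j.isLt; omega⟩
      ⟨2 * (i : ℕ), by have := i.isLt; omega⟩
    have h5b := g5 ⟨2 * (j : ℕ) + 1, by have := j.isLt; omega⟩
      ⟨2 * (i : ℕ), by have := i.isLt; omega⟩
    rcases psi_col_cases a b U j (g6 j) with ⟨e1, e2, e3⟩ | ⟨e1, e2, e3⟩ | ⟨e1, e2, e3⟩ |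
        ⟨e1, e2, e3⟩ | ⟨e1, e2, e3⟩ <;> rw [e3] <;>
      first
        | (rw [e2] at h5b; exact h5b)
        | (rw [e1] at h5a; exact h5a)
  · -- no (1,4) column
    intro j
    rcases psi_col_cases a b U j (g6 j) with ⟨e1, e2, e3⟩ | ⟨e1, e2, e3⟩ | ⟨e1, e2, e3⟩ |
      ⟨e1, e2, e3⟩ | ⟨e1, e2, e3⟩ <;> rw [e3] <;> exact (by decide)
  · -- uniqueness of (2,3)
    intro j j' u u'
    rcases psi_col_cases a b U j (g6 j) with ⟨e1, e2, e3⟩ | ⟨e1, e2, e3⟩ | ⟨e1, e2, e3⟩ |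
        ⟨e1, e2, e3⟩ | ⟨e1, e2, e3⟩ <;>
      rcases psi_col_cases a b U j' (g6 j') with ⟨f1, f2, f3⟩ | ⟨f1, f2, f3⟩ | ⟨f1, f2, f3⟩ |
        ⟨f1, f2, f3⟩ | ⟨f1, f2, f3⟩ <;>
      first
        | (rw [e3] at u; exact absurd u (by decide))
        | (rw [f3] at u'; exact absurd u' (by decide))
        | skip
    -- both blocks are ((1,3),(2,4))
    rcases lt_trichotomy (j : ℕ) (j' : ℕ) with h | h | h
    · exfalso
      have hB := g3 ⟨2 * (j : ℕ) + 1, by have := j.isLt; omega⟩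
        ⟨2 * (j' : ℕ), by have := j'.isLt; omega⟩ (by rw [Fin.le_def]; simp; omega)
      rw [e2, f1] at hB
      simp at hB
    · exact Fin.ext h
    · exfalso
      have hB := g3 ⟨2 * (j' : ℕ) + 1, by have := j'.isLt; omega⟩
        ⟨2 * (j : ℕ), by have := j.isLt; omega⟩ (by rw [Fin.le_def]; simp; omega)
      rw [f2, e1] at hB
      simp at hB

lemma phi_psi (a b : ℕ) (U : LTabT a b) (hU : U ∈ LTC2 a b) :
    phiC2 a b (psiC2 a b U) = U := by
  obtain ⟨g1, g2, g3, g4, g5, g6, g7⟩ := hU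
  refine Prod.ext_iff.mpr ⟨funext fun k => ?_, funext fun k => ?_⟩
  · -- columns
    obtain ⟨j, hj⟩ : ∃ j : Fin b, (j : ℕ) = (k : ℕ) / 2 :=
      ⟨⟨(k : ℕ) / 2, by have := k.isLt; omega⟩, rfl⟩
    have hkb := k.isLt
    have hk0 : (k : ℕ) % 2 = 0 →
        (⟨2 * (j : ℕ), by have := j.isLt; omega⟩ : Fin (2 * b)) = k :=
      fun h => Fin.ext (by simp only [Fin.val_mk]; omega)
    have hk1 : (k : ℕ) % 2 = 1 →
        (⟨2 * (j : ℕ) + 1, by have := j.isLt; omega⟩ : Fin (2 * b)) = k :=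
      fun h => Fin.ext (by simp only [Fin.val_mk]; omega)
    rcases Nat.mod_two_eq_zero_or_one (k : ℕ) with hp | hp
    · have hk := hk0 hp
      rcases phi_col_cases a b (psiC2 a b U) k j hj with ⟨e1, e2, e3⟩ | ⟨e1, e2, e3⟩ | ⟨e1, e3⟩ <;>
        rcases psi_col_cases a b U j (g6 j) with ⟨f1, f2, f3⟩ | ⟨f1, f2, f3⟩ | ⟨f1, f2, f3⟩ |
          ⟨f1, f2, f3⟩ | ⟨f1, f2, f3⟩ <;>
        first
          | omega
          | (rw [e3]; (try rw [f3]); rw [← hk]; exact f1.symm)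
          | (exfalso; rw [f3] at e1; simp only [Prod.mk.injEq] at e1; omega)
          | (rw [f3] at e1; exact absurd rfl e1)
    · have hk := hk1 hp
      rcases phi_col_cases a b (psiC2 a b U) k j hj with ⟨e1, e2, e3⟩ | ⟨e1, e2, e3⟩ | ⟨e1, e3⟩ <;>
        rcases psi_col_cases a b U j (g6 j) with ⟨f1, f2, f3⟩ | ⟨f1, f2, f3⟩ | ⟨f1, f2, f3⟩ |
          ⟨f1, f2, f3⟩ | ⟨f1, f2, f3⟩ <;>
        first
          | omega
          | (rw [e3]; (try rw [f3]); rw [← hk]; exact f2.symm)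
          | (exfalso; rw [f3] at e1; simp only [Prod.mk.injEq] at e1; omega)
          | (rw [f3] at e1; exact absurd rfl e1)
  · -- rows
    obtain ⟨j, hj⟩ : ∃ j : Fin a, (j : ℕ) = (k : ℕ) / 2 :=
      ⟨⟨(k : ℕ) / 2, by have := k.isLt; omega⟩, rfl⟩
    have hkb := k.isLt
    have hk0 : (k : ℕ) % 2 = 0 →
        (⟨2 * (j : ℕ), by have := j.isLt; omega⟩ : Fin (2 * a)) = k :=
      fun h => Fin.ext (by simp only [Fin.val_mk]; omega)
    have hk1 : (k : ℕ) % 2 = 1 →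
        (⟨2 * (j : ℕ) + 1, by have := j.isLt; omega⟩ : Fin (2 * a)) = k :=
      fun h => Fin.ext (by simp only [Fin.val_mk]; omega)
    rw [phi_row a b (psiC2 a b U) k j hj, psi_row_eq]
    rcases Nat.mod_two_eq_zero_or_one (k : ℕ) with hp | hp
    · rw [hk0 hp]
    · rw [g7 j, hk1 hp]

/-- The map `φ` is a bijection from `S_C2(a,b)` onto `LT_C2(a,b)`, and it is
weight-preserving: the entry-count statistics of `U = φ(T)` satisfy
`n₁(U) − n₂(U) + n₃(U) − n₄(U) = 2(n₁(T) − n₂(T) + n₃(T) − n₄(T))` and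
`n₂(U) − n₃(U) = 2(n₂(T) − n₃(T))`. -/
theorem C2_littelmann_bijection (a b : ℕ) :
    Set.BijOn (phiC2 a b) (SC2 a b) (LTC2 a b) ∧
    ∀ T ∈ SC2 a b,
      ((nkOf (phiC2 a b T) 1 : ℤ) - (nkOf (phiC2 a b T) 2 : ℤ) +
          (nkOf (phiC2 a b T) 3 : ℤ) - (nkOf (phiC2 a b T) 4 : ℤ) =
        2 * ((nkOf T 1 : ℤ) - (nkOf T 2 : ℤ) + (nkOf T 3 : ℤ) - (nkOf T 4 : ℤ))) ∧
      ((nkOf (phiC2 a b T) 2 : ℤ) - (nkOf (phiC2 a b T) 3 : ℤ) =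
        2 * ((nkOf T 2 : ℤ) - (nkOf T 3 : ℤ))) := by
  constructor
  · exact ⟨phi_mapsTo a b, fun T _ T' _ h => phi_inj a b h,
      fun U hU => ⟨psiC2 a b U, psi_mem a b U hU, phi_psi a b U hU⟩⟩
  · intro T hT
    constructor
    · rw [nk_expand1 (phiC2 a b T), nk_expand1 T]
      exact wt_phi a b T Sw1 (by norm_num [Sw1])
    · rw [nk_expand2 (phiC2 a b T), nk_expand2 T]
      exact wt_phi a b T Sw2 (by norm_num [Sw2])
end
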